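/- arXiv:2407.09655 — 3 statements merged into one kernel-verified Lean document; each statement's English description precedes it below -/
import Mathlib

section
/- The operator Γ on ℓ²(S_N) satisfies Γ = ((H_N − H_N^{(2)})/N) I − 2((H_N^{(2)} − H_N^{(3)})/N) W^{(2)} − ((H_N − 3H_N^{(2)} + 2H_N^{(3)})/N) W^{(3)}. -/
open scoped Classical
open Matrix
set_option maxHeartbeats 1000000

/-- Embedding of `Fin (k+1)` into `Fin N` (where `k : Fin N`). -/
def emb {N : ℕ} (k : Fin N) (t : Fin (k.val + 1)) : Fin N :=
  ⟨t.val, lt_of_lt_of_le t.isLt k.isLt⟩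

/-- `Phi t = (N t_N)(N−1 t_{N−1})⋯(2 t_2)(1 t_1)`, the strictly monotone factorization map. -/
def Phi {N : ℕ} (t : ∀ k : Fin N, Fin (k.val + 1)) : Equiv.Perm (Fin N) :=
  ((List.finRange N).reverse.map fun k => Equiv.swap k (emb k (t k))).prod

instance {N : ℕ} : Nonempty (∀ k : Fin N, Fin (k.val + 1)) := ⟨fun _ => 0⟩

/-- `tof π` is the tuple `(t_1(π),…,t_N(π))` of the strictly monotone factorization of `π`. -/
noncomputable def tof {N : ℕ} (π : Equiv.Perm (Fin N)) : ∀ k : Fin N, Fin (k.val + 1) :=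
  Function.invFun Phi π

/-- `ptail π k` is `π_{>k} = (N t_N)⋯(k+1 t_{k+1})`. -/
noncomputable def ptail {N : ℕ} (π : Equiv.Perm (Fin N)) (k : Fin N) : Equiv.Perm (Fin N) :=
  (((List.finRange N).reverse.filter fun j => decide (k < j)).map
    fun j => Equiv.swap j (emb j (tof π j))).prod

/-- `phead π k` is `π_{<k} = (k−1 t_{k−1})⋯(1 t_1)`. -/
noncomputable def phead {N : ℕ} (π : Equiv.Perm (Fin N)) (k : Fin N) : Equiv.Perm (Fin N) :=
  (((List.finRange N).reverse.filter fun j => decide (j < k)).map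
    fun j => Equiv.swap j (emb j (tof π j))).prod

/-- The matrix of the unitary `L^τ` on `ℓ²(S_N)`, `L^τ|π⟩ = |τπ⟩`. -/
noncomputable def Lmat {N : ℕ} (τ : Equiv.Perm (Fin N)) :
    Matrix (Equiv.Perm (Fin N)) (Equiv.Perm (Fin N)) ℂ := fun ρ π =>
  if ρ = τ * π then 1 else 0

/-- The matrix of the unitary `R^σ` on `ℓ²(S_N)`, `R^σ|π⟩ = |πσ⁻¹⟩`. -/
noncomputable def Rmat {N : ℕ} (σ : Equiv.Perm (Fin N)) :
    Matrix (Equiv.Perm (Fin N)) (Equiv.Perm (Fin N)) ℂ := fun ρ π =>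
  if ρ = π * σ⁻¹ then 1 else 0

/-- The matrix of the orthogonal projection `P_x` on `ℓ²(S_N)`, determined by
`P_x|π⟩ = (1/x) ∑_{s=1}^{x} |π_{>x} (x s) π_{<x}⟩`. -/
noncomputable def PxPerm {N : ℕ} (x : Fin N) :
    Matrix (Equiv.Perm (Fin N)) (Equiv.Perm (Fin N)) ℂ := fun ρ π =>
  if ∃ s : Fin (x.val + 1), ρ = ptail π x * Equiv.swap x (emb x s) * phead π x then
    ((x.val : ℂ) + 1)⁻¹
  else 0

/-- `W^{(ℓ)}`, the average of `R^γ` over all `ℓ`-cycles `γ ∈ S_N`. -/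
noncomputable def Wmat {N : ℕ} (l : ℕ) :
    Matrix (Equiv.Perm (Fin N)) (Equiv.Perm (Fin N)) ℂ :=
  (((Finset.univ.filter fun γ : Equiv.Perm (Fin N) =>
        γ.IsCycle ∧ γ.support.card = l).card : ℂ))⁻¹ •
    ∑ γ ∈ Finset.univ.filter
        (fun γ : Equiv.Perm (Fin N) => γ.IsCycle ∧ γ.support.card = l),
      Rmat γ

/-- The twirled operator
`Γ = (1/N) ∑_{x=1}^{N} (1/x) · (1/(N!)²) ∑_{σ,τ} (L^τ R^σ)† (I − P_x) (L^τ R^σ)` on `ℓ²(S_N)`. -/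
noncomputable def GammaM {N : ℕ} :
    Matrix (Equiv.Perm (Fin N)) (Equiv.Perm (Fin N)) ℂ :=
  (N : ℂ)⁻¹ • ∑ x : Fin N, ((x.val : ℂ) + 1)⁻¹ •
    ((((N.factorial : ℂ)) ^ 2)⁻¹ •
      ∑ σ : Equiv.Perm (Fin N), ∑ τ : Equiv.Perm (Fin N),
        (Lmat τ * Rmat σ)ᴴ *
          ((1 : Matrix (Equiv.Perm (Fin N)) (Equiv.Perm (Fin N)) ℂ) - PxPerm x) *
          (Lmat τ * Rmat σ))

/-- The generalized harmonic number `H_N^{(m)} = ∑_{x=1}^{N} x^{−m}` (as a complex scalar). -/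
noncomputable def Hm (N m : ℕ) : ℂ := ∑ x ∈ Finset.range N, (((x : ℂ) + 1) ^ m)⁻¹

-- ## Part 1

theorem sorted_split {α : Type*} [LinearOrder α] :
    ∀ (l : List α), l.Pairwise (· < ·) → ∀ x ∈ l,
      l = (l.filter (fun j => decide (j < x))) ++ x :: (l.filter (fun j => decide (x < j)))
  | [], _, x, hx => by simp at hx
  | a :: t, hp, x, hx => by
    have h1 : ∀ b ∈ t, a < b := fun b hb => (List.pairwise_cons.1 hp).1 b hb
    rcases List.mem_cons.1 hx with h | h
    · subst h
      have e1 : (x :: t).filter (fun j => decide (j < x)) = [] := by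
        rw [List.filter_eq_nil_iff]
        intro b hb
        rcases List.mem_cons.1 hb with h | h
        · subst h; simp
        · simp [not_lt.2 (h1 b h).le]
      have e2 : (x :: t).filter (fun j => decide (x < j)) = t := by
        rw [List.filter_cons_of_neg (by simp)]
        rw [List.filter_eq_self]
        intro b hb; simp [h1 b hb]
      rw [e1, e2]; simp
    · have hax : a < x := h1 x h
      have e1 : (a :: t).filter (fun j => decide (j < x))
          = a :: t.filter (fun j => decide (j < x)) := by
        rw [List.filter_cons_of_pos (by simp [hax])]
      have e2 : (a :: t).filter (fun j => decide (x < j))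
          = t.filter (fun j => decide (x < j)) := by
        rw [List.filter_cons_of_neg (by simp [not_lt.2 hax.le])]
      rw [e1, e2, List.cons_append]
      congr 1
      exact sorted_split t (List.pairwise_cons.1 hp).2 x h

def upP {N : ℕ} (t : ∀ k : Fin N, Fin (k.val + 1)) (x : Fin N) : Equiv.Perm (Fin N) :=
  (((List.finRange N).reverse.filter fun j => decide (x < j)).map
    fun j => Equiv.swap j (emb j (t j))).prod

def loP {N : ℕ} (t : ∀ k : Fin N, Fin (k.val + 1)) (x : Fin N) : Equiv.Perm (Fin N) :=
  (((List.finRange N).reverse.filter fun j => decide (j < x)).map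
    fun j => Equiv.swap j (emb j (t j))).prod

theorem ptail_eq {N : ℕ} (π : Equiv.Perm (Fin N)) (x : Fin N) : ptail π x = upP (tof π) x := rfl
theorem phead_eq {N : ℕ} (π : Equiv.Perm (Fin N)) (x : Fin N) : phead π x = loP (tof π) x := rfl

theorem Phi_split {N : ℕ} (t : ∀ k : Fin N, Fin (k.val + 1)) (x : Fin N) :
    Phi t = upP t x * Equiv.swap x (emb x (t x)) * loP t x := by
  unfold Phi upP loP
  rw [List.filter_reverse, List.filter_reverse]
  conv_lhs =>
    rw [sorted_split (List.finRange N) (List.pairwise_lt_finRange N) x (List.mem_finRange x)]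
  rw [List.reverse_append, List.reverse_cons]
  simp [List.map_append, List.prod_append, mul_assoc]

theorem prod_fixes {α : Type*} [DecidableEq α] :
    ∀ (l : List (Equiv.Perm α)) (a : α), (∀ g ∈ l, g a = a) → l.prod a = a
  | [], _, _ => rfl
  | g :: t, a, h => by
    rw [List.prod_cons, Equiv.Perm.mul_apply,
      prod_fixes t a (fun g hg => h g (List.mem_cons_of_mem _ hg))]
    exact h g List.mem_cons_self

theorem loP_fixes {N : ℕ} (t : ∀ k : Fin N, Fin (k.val + 1)) (x : Fin N) (a : Fin N)
    (ha : x ≤ a) : loP t x a = a := by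
  apply prod_fixes
  intro g hg
  rcases List.mem_map.1 hg with ⟨j, hj, rfl⟩
  have hjx : j < x := by simpa using (List.mem_filter.1 hj).2
  apply Equiv.swap_apply_of_ne_of_ne
  · intro h
    subst h
    exact absurd ha (not_le.2 hjx)
  · intro h
    have h1 : a.val = (t j).val := by rw [h]; rfl
    have h2 : (t j).val < j.val + 1 := (t j).isLt
    have h3 : j.val < x.val := hjx
    have h4 : x.val ≤ a.val := ha
    omega

theorem upP_congr {N : ℕ} (t t' : ∀ k : Fin N, Fin (k.val + 1)) (x : Fin N)
    (h : ∀ j, x < j → t j = t' j) : upP t x = upP t' x := by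
  unfold upP
  congr 1
  apply List.map_congr_left
  intro j hj
  have hxj : x < j := by simpa using (List.mem_filter.1 hj).2
  rw [h j hxj]

theorem loP_congr {N : ℕ} (t t' : ∀ k : Fin N, Fin (k.val + 1)) (x : Fin N)
    (h : ∀ j, j < x → t j = t' j) : loP t x = loP t' x := by
  unfold loP
  congr 1
  apply List.map_congr_left
  intro j hj
  have hxj : j < x := by simpa using (List.mem_filter.1 hj).2
  rw [h j hxj]

theorem emb_inj {N : ℕ} (x : Fin N) {a b : Fin (x.val + 1)} (h : emb x a = emb x b) : a = b := by
  have : a.val = b.val := by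
    have := congrArg Fin.val h
    simpa [emb] using this
  exact Fin.ext this

theorem Phi_injective {N : ℕ} : Function.Injective (Phi (N := N)) := by
  intro t t' h
  funext k
  suffices H : ∀ m : ℕ, ∀ k : Fin N, N - k.val ≤ m → t k = t' k from H N k (by omega)
  intro m
  induction m with
  | zero => intro k hk; exact absurd hk (by have := k.isLt; omega)
  | succ m ih =>
    intro k _
    have hup : upP t k = upP t' k := by
      apply upP_congr
      intro j hj
      have hj' : k.val < j.val := hj
      exact ih j (by omega)
    have h2 : Equiv.swap k (emb k (t k)) * loP t k
        = Equiv.swap k (emb k (t' k)) * loP t' k := by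
      have := (Phi_split t k).symm.trans (h.trans (Phi_split t' k))
      rw [hup] at this
      rw [mul_assoc, mul_assoc] at this
      exact mul_left_cancel this
    have h3 : emb k (t k) = emb k (t' k) := by
      have e1 : (Equiv.swap k (emb k (t k)) * loP t k) k = emb k (t k) := by
        rw [Equiv.Perm.mul_apply, loP_fixes t k k le_rfl, Equiv.swap_apply_left]
      have e2 : (Equiv.swap k (emb k (t' k)) * loP t' k) k = emb k (t' k) := by
        rw [Equiv.Perm.mul_apply, loP_fixes t' k k le_rfl, Equiv.swap_apply_left]
      rw [← e1, ← e2, h2]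
    exact emb_inj k h3

theorem card_pi_eq {N : ℕ} :
    Fintype.card (∀ k : Fin N, Fin (k.val + 1)) = Fintype.card (Equiv.Perm (Fin N)) := by
  rw [Fintype.card_pi, Fintype.card_perm, Fintype.card_fin]
  simp only [Fintype.card_fin]
  rw [Fin.prod_univ_eq_prod_range (fun i => i + 1)]
  exact Finset.prod_range_add_one_eq_factorial N

theorem Phi_bijective {N : ℕ} : Function.Bijective (Phi (N := N)) :=
  (Fintype.bijective_iff_injective_and_card Phi).2 ⟨Phi_injective, card_pi_eq⟩

theorem Phi_tof {N : ℕ} (π : Equiv.Perm (Fin N)) : Phi (tof π) = π :=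
  Function.rightInverse_invFun Phi_bijective.surjective π

theorem tof_Phi {N : ℕ} (t : ∀ k : Fin N, Fin (k.val + 1)) : tof (Phi t) = t :=
  Function.leftInverse_invFun Phi_injective t

noncomputable def PhiE {N : ℕ} : (∀ k : Fin N, Fin (k.val + 1)) ≃ Equiv.Perm (Fin N) :=
  Equiv.ofBijective Phi Phi_bijective

noncomputable def Umat {N : ℕ} (τ σ : Equiv.Perm (Fin N)) :
    Matrix (Equiv.Perm (Fin N)) (Equiv.Perm (Fin N)) ℂ := fun α β =>
  if α = τ * β * σ⁻¹ then 1 else 0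

theorem LR_eq_U {N : ℕ} (τ σ : Equiv.Perm (Fin N)) : Lmat τ * Rmat σ = Umat τ σ := by
  ext α β
  simp only [Matrix.mul_apply, Lmat, Rmat, Umat, ite_mul, one_mul, zero_mul]
  rw [Finset.sum_eq_single (β * σ⁻¹)]
  · simp [mul_assoc]
  · intro c _ hc
    simp [hc]
  · simp

theorem conj_apply {N : ℕ} (M : Matrix (Equiv.Perm (Fin N)) (Equiv.Perm (Fin N)) ℂ)
    (τ σ ρ π : Equiv.Perm (Fin N)) :
    ((Umat τ σ)ᴴ * M * Umat τ σ) ρ π = M (τ * ρ * σ⁻¹) (τ * π * σ⁻¹) := by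
  simp only [Matrix.mul_apply, Matrix.conjTranspose_apply, Umat]
  rw [Finset.sum_eq_single (τ * π * σ⁻¹)]
  · rw [if_pos rfl, mul_one]
    simp only [apply_ite (star (R := ℂ)), star_one, star_zero, ite_mul, one_mul, zero_mul]
    rw [Finset.sum_eq_single (τ * ρ * σ⁻¹)]
    · simp
    · intro c _ hc
      rw [if_neg hc]
    · simp
  · intro c _ hc
    rw [if_neg hc, mul_zero]
  · simp
theorem emb_last {N : ℕ} (x : Fin N) : emb x (Fin.last x.val) = x := Fin.ext rfl

theorem emb_ne_last {N : ℕ} (x : Fin N) {r : Fin (x.val + 1)} (hr : r ≠ Fin.last x.val) :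
    emb x r ≠ x := by
  intro h
  apply hr
  have : r.val = x.val := congrArg Fin.val h
  exact Fin.ext this

theorem swx_inj {N : ℕ} (x : Fin N) {s r : Fin (x.val + 1)}
    (h : Equiv.swap x (emb x s) = Equiv.swap x (emb x r)) : s = r := by
  apply emb_inj x
  have h1 : Equiv.swap x (emb x s) x = emb x s := Equiv.swap_apply_left _ _
  have h2 : Equiv.swap x (emb x r) x = emb x r := Equiv.swap_apply_left _ _
  rw [← h1, ← h2, h]

theorem cycleType_c {N : ℕ} (x : Fin N) (s r : Fin (x.val + 1)) :
    (Equiv.swap x (emb x s) * Equiv.swap x (emb x r)).cycleType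
      = if s = r then 0 else
        if s = Fin.last x.val ∨ r = Fin.last x.val then {2} else {3} := by
  by_cases hsr : s = r
  · subst hsr
    rw [if_pos rfl, Equiv.swap_mul_self]
    exact Equiv.Perm.cycleType_one
  rw [if_neg hsr]
  by_cases hs : s = Fin.last x.val
  · subst hs
    rw [if_pos (Or.inl rfl), emb_last, Equiv.swap_self]
    have hr : emb x r ≠ x := emb_ne_last x (fun h => hsr h.symm)
    have : (Equiv.refl (Fin N)) = (1 : Equiv.Perm (Fin N)) := rfl
    rw [this, one_mul]
    rw [(Equiv.Perm.isCycle_swap (Ne.symm hr)).cycleType,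
      Equiv.Perm.card_support_swap (Ne.symm hr)]
  by_cases hr : r = Fin.last x.val
  · subst hr
    rw [if_pos (Or.inr rfl), emb_last, Equiv.swap_self]
    have hs' : emb x s ≠ x := emb_ne_last x hs
    have : (Equiv.refl (Fin N)) = (1 : Equiv.Perm (Fin N)) := rfl
    rw [this, mul_one]
    rw [(Equiv.Perm.isCycle_swap (Ne.symm hs')).cycleType,
      Equiv.Perm.card_support_swap (Ne.symm hs')]
  · rw [if_neg (by tauto)]
    have h1 : x ≠ emb x s := Ne.symm (emb_ne_last x hs)
    have h2 : x ≠ emb x r := Ne.symm (emb_ne_last x hr)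
    have h3 : emb x s ≠ emb x r := fun h => hsr (emb_inj x h)
    exact (Equiv.Perm.isThreeCycle_swap_mul_swap_same h1 h2 h3).cycleType

theorem cycleType_singleton_iff {α : Type*} [Fintype α] [DecidableEq α]
    (γ : Equiv.Perm α) (l : ℕ) :
    γ.cycleType = {l} ↔ γ.IsCycle ∧ γ.support.card = l := by
  constructor
  · intro h
    have hc : γ.IsCycle := Equiv.Perm.card_cycleType_eq_one.1 (by rw [h]; rfl)
    refine ⟨hc, ?_⟩
    have h2 := hc.cycleType
    rw [h] at h2
    have h3 : ({l} : Multiset ℕ) = {γ.support.card} := by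
      rw [h2]
    rw [Multiset.singleton_inj] at h3
    omega
  · rintro ⟨hc, hcard⟩
    rw [hc.cycleType, hcard]

theorem sum_ite_exists {ι : Type*} [Fintype ι] (p : ι → Prop) [DecidablePred p]
    [Decidable (∃ a, p a)] (h : ∀ a b, p a → p b → a = b) (c : ℂ) :
    (if ∃ a, p a then c else 0) = ∑ a, if p a then c else 0 := by
  by_cases he : ∃ a, p a
  · obtain ⟨a, ha⟩ := he
    rw [if_pos ⟨a, ha⟩, Finset.sum_eq_single a]
    · rw [if_pos ha]
    · intro b _ hb
      exact if_neg (fun hp => hb (h b a hp ha))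
    · simp
  · rw [if_neg he]
    exact (Finset.sum_eq_zero fun a _ => if_neg (fun hp => he ⟨a, hp⟩)).symm
theorem sum_ite_ne {ι : Type*} [Fintype ι] [DecidableEq ι] (a : ι) (c d : ℂ) :
    (∑ x : ι, if x = a then c else d) = c + ((Fintype.card ι : ℂ) - 1) * d := by
  have h : ∀ x : ι, (if x = a then c else d) = d + (if x = a then c - d else 0) := by
    intro x
    by_cases hx : x = a <;> simp [hx]
  rw [Finset.sum_congr rfl (fun x _ => h x), Finset.sum_add_distrib, Finset.sum_const,
    Finset.sum_ite_eq' Finset.univ a (fun _ => c - d), if_pos (Finset.mem_univ a)]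
  simp [Finset.card_univ]
  ring

theorem fiber_sum {N : ℕ} (g c : Equiv.Perm (Fin N)) (hc : c.cycleType = g.cycleType) :
    (∑ τ : Equiv.Perm (Fin N), if τ * g * τ⁻¹ = c then (1 : ℂ) else 0)
      * ((Finset.univ.filter fun γ : Equiv.Perm (Fin N) =>
            γ.cycleType = g.cycleType).card : ℂ)
      = (N.factorial : ℂ) := by
  classical
  set K := Finset.univ.filter fun γ : Equiv.Perm (Fin N) => γ.cycleType = g.cycleType with hK
  set F : Equiv.Perm (Fin N) → ℂ := fun c => ∑ τ : Equiv.Perm (Fin N),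
    if τ * g * τ⁻¹ = c then (1 : ℂ) else 0 with hF
  have hconst : ∀ c' ∈ K, F c' = F c := by
    intro c' hc'
    have hc'2 : c'.cycleType = g.cycleType := by
      simpa [hK] using hc'
    have hconj : IsConj c c' := Equiv.Perm.isConj_of_cycleType_eq (hc.trans hc'2.symm)
    obtain ⟨δ, hδ⟩ := isConj_iff.1 hconj
    have key : ∀ x : Equiv.Perm (Fin N),
        (if x * g * x⁻¹ = c then (1 : ℂ) else 0)
          = if (δ * x) * g * (δ * x)⁻¹ = c' then (1 : ℂ) else 0 := by
      intro x
      have e : (δ * x) * g * (δ * x)⁻¹ = δ * (x * g * x⁻¹) * δ⁻¹ := by group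
      rw [e, ← hδ]
      congr 1
      rw [eq_iff_iff]
      exact ⟨fun h => by rw [h], fun h => mul_left_cancel (mul_right_cancel h)⟩
    exact (Fintype.sum_equiv (Equiv.mulLeft δ)
      (fun x => if x * g * x⁻¹ = c then (1 : ℂ) else 0)
      (fun τ => if τ * g * τ⁻¹ = c' then (1 : ℂ) else 0)
      (fun x => by simpa using key x)).symm
  have hsum : ∑ c' ∈ K, F c' = (N.factorial : ℂ) := by
    rw [hF]
    simp only
    rw [Finset.sum_comm]
    have h1 : ∀ τ : Equiv.Perm (Fin N),
        (∑ c' ∈ K, if τ * g * τ⁻¹ = c' then (1 : ℂ) else 0) = 1 := by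
      intro τ
      rw [Finset.sum_ite_eq K (τ * g * τ⁻¹) (fun _ => (1 : ℂ))]
      rw [if_pos]
      simp [hK, Equiv.Perm.cycleType_conj]
    rw [Finset.sum_congr rfl (fun τ _ => h1 τ)]
    simp [Finset.card_univ, Fintype.card_perm]
  calc F c * (K.card : ℂ) = ∑ _c' ∈ K, F c := by rw [Finset.sum_const]; ring
  _ = ∑ c' ∈ K, F c' := (Finset.sum_congr rfl hconst).symm
  _ = (N.factorial : ℂ) := hsum

theorem count2 (n : ℕ) :
    (∑ s : Fin (n + 1), ∑ r : Fin (n + 1),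
      if ¬s = r ∧ (s = Fin.last n ∨ r = Fin.last n) then (1 : ℂ) else 0) = 2 * n := by
  classical
  have inner : ∀ s : Fin (n + 1),
      (∑ r : Fin (n + 1), if ¬s = r ∧ (s = Fin.last n ∨ r = Fin.last n) then (1 : ℂ) else 0)
      = if s = Fin.last n then (n : ℂ) else 1 := by
    intro s
    by_cases hs : s = Fin.last n
    · subst hs
      rw [if_pos rfl]
      have h2 : ∀ r : Fin (n + 1),
          (if ¬Fin.last n = r ∧ (Fin.last n = Fin.last n ∨ r = Fin.last n) then (1 : ℂ) else 0)
          = if r = Fin.last n then 0 else 1 := by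
        intro r
        by_cases h : r = Fin.last n
        · simp [h]
        · simp [h, Ne.symm h]
      rw [Finset.sum_congr rfl (fun r _ => h2 r), sum_ite_ne (Fin.last n) 0 1]
      simp
    · rw [if_neg hs]
      have h2 : ∀ r : Fin (n + 1),
          (if ¬s = r ∧ (s = Fin.last n ∨ r = Fin.last n) then (1 : ℂ) else 0)
          = if r = Fin.last n then 1 else 0 := by
        intro r
        by_cases h : r = Fin.last n
        · subst h
          simp [hs, fun h' : s = Fin.last n => hs h']
        · simp [h, hs]
      rw [Finset.sum_congr rfl (fun r _ => h2 r),
        Finset.sum_ite_eq' Finset.univ (Fin.last n) (fun _ => (1 : ℂ)),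
        if_pos (Finset.mem_univ _)]
  rw [Finset.sum_congr rfl (fun s _ => inner s), sum_ite_ne (Fin.last n) (n : ℂ) 1]
  simp only [Fintype.card_fin, Nat.cast_add, Nat.cast_one]
  ring

theorem count3 (n : ℕ) :
    (∑ s : Fin (n + 1), ∑ r : Fin (n + 1),
      if ¬s = r ∧ ¬(s = Fin.last n ∨ r = Fin.last n) then (1 : ℂ) else 0)
      = (n : ℂ) * ((n : ℂ) - 1) := by
  classical
  have inner : ∀ s : Fin (n + 1),
      (∑ r : Fin (n + 1), if ¬s = r ∧ ¬(s = Fin.last n ∨ r = Fin.last n) then (1 : ℂ) else 0)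
      = if s = Fin.last n then 0 else (n : ℂ) - 1 := by
    intro s
    by_cases hs : s = Fin.last n
    · simp [hs]
    · rw [if_neg hs]
      have h2 : ∀ r : Fin (n + 1),
          (if ¬s = r ∧ ¬(s = Fin.last n ∨ r = Fin.last n) then (1 : ℂ) else 0)
          = (if r = Fin.last n then 0 else 1) - (if r = s then 1 else 0) := by
        intro r
        by_cases h1 : r = Fin.last n
        · subst h1
          simp [hs, Ne.symm hs]
        · by_cases hr : r = s
          · subst hr
            simp [h1]
          · simp [h1, hr, hs, Ne.symm hr]
      rw [Finset.sum_congr rfl (fun r _ => h2 r), Finset.sum_sub_distrib,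
        sum_ite_ne (Fin.last n) 0 1,
        Finset.sum_ite_eq' Finset.univ s (fun _ => (1 : ℂ)), if_pos (Finset.mem_univ _)]
      simp
  rw [Finset.sum_congr rfl (fun s _ => inner s), sum_ite_ne (Fin.last n) 0 ((n : ℂ) - 1)]
  simp only [Fintype.card_fin, Nat.cast_add, Nat.cast_one]
  ring
theorem sum_pi_coord {N : ℕ} (x : Fin N) (G : Fin (x.val + 1) → ℂ) :
    (∑ t : ∀ k : Fin N, Fin (k.val + 1), G (t x))
      = (Fintype.card (∀ j : {j : Fin N // j ≠ x}, Fin (j.val.val + 1)) : ℂ) *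
        ∑ r : Fin (x.val + 1), G r := by
  rw [Fintype.sum_equiv (Equiv.piSplitAt x fun k : Fin N => Fin (k.val + 1))
    (fun t => G (t x)) (fun p => G p.1) (fun t => rfl)]
  rw [Fintype.sum_prod_type]
  rw [Finset.mul_sum]
  apply Finset.sum_congr rfl
  intro r _
  simp [Finset.sum_const, Finset.card_univ, nsmul_eq_mul]

theorem card_rest {N : ℕ} (x : Fin N) :
    ((x.val + 1) : ℕ) * Fintype.card (∀ j : {j : Fin N // j ≠ x}, Fin (j.val.val + 1))
      = N.factorial := by
  have h1 := Fintype.card_congr (Equiv.piSplitAt x fun k : Fin N => Fin (k.val + 1))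
  rw [Fintype.card_prod, Fintype.card_fin] at h1
  rw [← h1, card_pi_eq, Fintype.card_perm, Fintype.card_fin]

theorem S_stage1 {N : ℕ} (x : Fin N) (ρ π : Equiv.Perm (Fin N)) :
    (∑ σ : Equiv.Perm (Fin N), ∑ τ : Equiv.Perm (Fin N),
        PxPerm x (τ * ρ * σ⁻¹) (τ * π * σ⁻¹))
      = (Fintype.card (∀ j : {j : Fin N // j ≠ x}, Fin (j.val.val + 1)) : ℂ) *
        ∑ r : Fin (x.val + 1), ∑ τ : Equiv.Perm (Fin N),
          (if ∃ s : Fin (x.val + 1), τ * (ρ * π⁻¹) * τ⁻¹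
              = Equiv.swap x (emb x s) * Equiv.swap x (emb x r)
           then ((x.val : ℂ) + 1)⁻¹ else 0) := by
  classical
  rw [Finset.sum_comm]
  -- reindex σ ↦ β = τ * π * σ⁻¹
  have step1 : ∀ τ : Equiv.Perm (Fin N),
      (∑ σ : Equiv.Perm (Fin N), PxPerm x (τ * ρ * σ⁻¹) (τ * π * σ⁻¹))
      = ∑ β : Equiv.Perm (Fin N), PxPerm x ((τ * (ρ * π⁻¹) * τ⁻¹) * β) β := by
    intro τ
    set e : Equiv.Perm (Fin N) ≃ Equiv.Perm (Fin N) :=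
      (Equiv.inv (Equiv.Perm (Fin N))).trans (Equiv.mulLeft (τ * π)) with he
    calc (∑ σ : Equiv.Perm (Fin N), PxPerm x (τ * ρ * σ⁻¹) (τ * π * σ⁻¹))
        = ∑ σ : Equiv.Perm (Fin N),
            PxPerm x ((τ * (ρ * π⁻¹) * τ⁻¹) * (e σ)) (e σ) := by
          apply Finset.sum_congr rfl
          intro σ _
          have h1 : e σ = τ * π * σ⁻¹ := by rw [he]; rfl
          rw [h1]
          congr 1
          group
      _ = ∑ β : Equiv.Perm (Fin N), PxPerm x ((τ * (ρ * π⁻¹) * τ⁻¹) * β) β :=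
          Equiv.sum_comp e (fun β => PxPerm x ((τ * (ρ * π⁻¹) * τ⁻¹) * β) β)
  rw [Finset.sum_congr rfl (fun τ _ => step1 τ)]
  -- reindex β = Phi t and simplify the condition
  have step2 : ∀ τ : Equiv.Perm (Fin N),
      (∑ β : Equiv.Perm (Fin N), PxPerm x ((τ * (ρ * π⁻¹) * τ⁻¹) * β) β)
      = ∑ t : ∀ k : Fin N, Fin (k.val + 1),
          (if ∃ s : Fin (x.val + 1), τ * (ρ * π⁻¹) * τ⁻¹
              = upP t x * (Equiv.swap x (emb x s) * Equiv.swap x (emb x (t x))) * (upP t x)⁻¹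
           then ((x.val : ℂ) + 1)⁻¹ else 0) := by
    intro τ
    rw [← Equiv.sum_comp (PhiE (N := N))
      (fun β => PxPerm x ((τ * (ρ * π⁻¹) * τ⁻¹) * β) β)]
    apply Finset.sum_congr rfl
    intro t _
    have hPhiE : PhiE t = Phi t := rfl
    rw [hPhiE]
    unfold PxPerm
    apply if_congr _ rfl rfl
    have hinv : (Equiv.swap x (emb x (t x)))⁻¹ = Equiv.swap x (emb x (t x)) :=
      Equiv.swap_inv _ _
    have h3 : ∀ s : Fin (x.val + 1),
        (upP t x * Equiv.swap x (emb x s) * loP t x) * (Phi t)⁻¹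
        = upP t x * (Equiv.swap x (emb x s) * Equiv.swap x (emb x (t x))) * (upP t x)⁻¹ := by
      intro s
      rw [Phi_split t x]
      calc (upP t x * Equiv.swap x (emb x s) * loP t x) *
          (upP t x * Equiv.swap x (emb x (t x)) * loP t x)⁻¹
          = upP t x * (Equiv.swap x (emb x s) * (Equiv.swap x (emb x (t x)))⁻¹) *
            (upP t x)⁻¹ := by
            simp only [_root_.mul_inv_rev, mul_assoc, mul_inv_cancel_left]
        _ = _ := by rw [hinv]
    constructor
    · rintro ⟨s, hs⟩
      refine ⟨s, ?_⟩
      rw [ptail_eq, phead_eq, tof_Phi] at hs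
      rw [← h3 s, ← hs]
      group
    · rintro ⟨s, hs⟩
      refine ⟨s, ?_⟩
      rw [ptail_eq, phead_eq, tof_Phi]
      rw [hs, ← h3 s]
      group
  rw [Finset.sum_congr rfl (fun τ _ => step2 τ)]
  -- swap sums, absorb upP by reindexing τ
  rw [Finset.sum_comm]
  have step3 : ∀ t : ∀ k : Fin N, Fin (k.val + 1),
      (∑ τ : Equiv.Perm (Fin N),
        (if ∃ s : Fin (x.val + 1), τ * (ρ * π⁻¹) * τ⁻¹
            = upP t x * (Equiv.swap x (emb x s) * Equiv.swap x (emb x (t x))) * (upP t x)⁻¹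
         then ((x.val : ℂ) + 1)⁻¹ else 0))
      = ∑ τ : Equiv.Perm (Fin N),
          (if ∃ s : Fin (x.val + 1), τ * (ρ * π⁻¹) * τ⁻¹
              = Equiv.swap x (emb x s) * Equiv.swap x (emb x (t x))
           then ((x.val : ℂ) + 1)⁻¹ else 0) := by
    intro t
    rw [← Equiv.sum_comp (Equiv.mulLeft (upP t x))
      (fun τ => if ∃ s : Fin (x.val + 1), τ * (ρ * π⁻¹) * τ⁻¹
          = upP t x * (Equiv.swap x (emb x s) * Equiv.swap x (emb x (t x))) * (upP t x)⁻¹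
        then ((x.val : ℂ) + 1)⁻¹ else 0)]
    apply Finset.sum_congr rfl
    intro τ _
    have h1 : Equiv.mulLeft (upP t x) τ = upP t x * τ := rfl
    rw [h1]
    apply if_congr _ rfl rfl
    constructor
    · rintro ⟨s, hs⟩
      refine ⟨s, ?_⟩
      have h2 : upP t x * (τ * (ρ * π⁻¹) * τ⁻¹) * (upP t x)⁻¹
          = upP t x * τ * (ρ * π⁻¹) * (upP t x * τ)⁻¹ := by group
      rw [← h2] at hs
      exact mul_left_cancel (mul_right_cancel hs)
    · rintro ⟨s, hs⟩
      refine ⟨s, ?_⟩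
      have h2 : upP t x * τ * (ρ * π⁻¹) * (upP t x * τ)⁻¹
          = upP t x * (τ * (ρ * π⁻¹) * τ⁻¹) * (upP t x)⁻¹ := by group
      rw [h2, hs]
  rw [Finset.sum_congr rfl (fun t _ => step3 t)]
  exact sum_pi_coord x (fun r => ∑ τ : Equiv.Perm (Fin N),
    (if ∃ s : Fin (x.val + 1), τ * (ρ * π⁻¹) * τ⁻¹
        = Equiv.swap x (emb x s) * Equiv.swap x (emb x r)
     then ((x.val : ℂ) + 1)⁻¹ else 0))
theorem S_stage2 {N : ℕ} (x : Fin N) (g : Equiv.Perm (Fin N)) :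
    (∑ r : Fin (x.val + 1), ∑ τ : Equiv.Perm (Fin N),
      (if ∃ s : Fin (x.val + 1), τ * g * τ⁻¹ = Equiv.swap x (emb x s) * Equiv.swap x (emb x r)
       then ((x.val : ℂ) + 1)⁻¹ else 0))
    = ((x.val : ℂ) + 1)⁻¹ *
      (if g = 1 then ((x.val : ℂ) + 1) * (N.factorial : ℂ)
       else if g.cycleType = {2} then 2 * (x.val : ℂ) * ((N.factorial : ℂ) /
          ((Finset.univ.filter fun γ : Equiv.Perm (Fin N) => γ.cycleType = ({2} : Multiset ℕ)).card : ℂ))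
       else if g.cycleType = {3} then (x.val : ℂ) * ((x.val : ℂ) - 1) * ((N.factorial : ℂ) /
          ((Finset.univ.filter fun γ : Equiv.Perm (Fin N) => γ.cycleType = ({3} : Multiset ℕ)).card : ℂ))
       else 0) := by
  classical
  have hsplit : ∀ (r : Fin (x.val + 1)) (τ : Equiv.Perm (Fin N)),
      (if ∃ s : Fin (x.val + 1), τ * g * τ⁻¹ = Equiv.swap x (emb x s) * Equiv.swap x (emb x r)
       then ((x.val : ℂ) + 1)⁻¹ else 0)
      = ((x.val : ℂ) + 1)⁻¹ *
        (if ∃ s : Fin (x.val + 1), τ * g * τ⁻¹ = Equiv.swap x (emb x s) * Equiv.swap x (emb x r)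
         then (1 : ℂ) else 0) := by
    intro r τ
    by_cases h : ∃ s : Fin (x.val + 1),
        τ * g * τ⁻¹ = Equiv.swap x (emb x s) * Equiv.swap x (emb x r)
    · rw [if_pos h, if_pos h, mul_one]
    · rw [if_neg h, if_neg h, mul_zero]
  simp only [hsplit]
  simp only [← Finset.mul_sum]
  congr 1
  -- main evaluation
  by_cases hg1 : g = 1
  · subst hg1
    rw [if_pos rfl]
    have hval : ∀ (r : Fin (x.val + 1)) (τ : Equiv.Perm (Fin N)),
        (if ∃ s : Fin (x.val + 1), τ * 1 * τ⁻¹ = Equiv.swap x (emb x s) * Equiv.swap x (emb x r)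
         then (1 : ℂ) else 0) = 1 := by
      intro r τ
      rw [if_pos]
      refine ⟨r, ?_⟩
      rw [mul_one, mul_inv_cancel, Equiv.swap_mul_self]
    simp only [hval]
    simp [Finset.card_univ, Fintype.card_perm, mul_comm]
  · rw [if_neg hg1]
    -- expand ∃ into a sum over s
    have hexp : ∀ (r : Fin (x.val + 1)) (τ : Equiv.Perm (Fin N)),
        (if ∃ s : Fin (x.val + 1), τ * g * τ⁻¹ = Equiv.swap x (emb x s) * Equiv.swap x (emb x r)
         then (1 : ℂ) else 0)
        = ∑ s : Fin (x.val + 1),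
            if τ * g * τ⁻¹ = Equiv.swap x (emb x s) * Equiv.swap x (emb x r)
            then (1 : ℂ) else 0 := by
      intro r τ
      apply sum_ite_exists
      intro a b ha hb
      exact swx_inj x (mul_right_cancel (ha.symm.trans hb))
    simp only [hexp]
    have hswap : ∀ r : Fin (x.val + 1),
        (∑ τ : Equiv.Perm (Fin N), ∑ s : Fin (x.val + 1),
          if τ * g * τ⁻¹ = Equiv.swap x (emb x s) * Equiv.swap x (emb x r)
          then (1 : ℂ) else 0)
        = ∑ s : Fin (x.val + 1), ∑ τ : Equiv.Perm (Fin N),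
          if τ * g * τ⁻¹ = Equiv.swap x (emb x s) * Equiv.swap x (emb x r)
          then (1 : ℂ) else 0 := fun r => Finset.sum_comm
    simp only [hswap]
    -- evaluate inner fiber sums
    have hKne : ∀ M : Multiset ℕ, g.cycleType = M →
        (((Finset.univ.filter fun γ : Equiv.Perm (Fin N) => γ.cycleType = M).card : ℂ)) ≠ 0 := by
      intro M hM
      have hmem : g ∈ Finset.univ.filter fun γ : Equiv.Perm (Fin N) => γ.cycleType = M := by
        simp [hM]
      exact Nat.cast_ne_zero.2 (Finset.card_ne_zero_of_mem hmem)
    have key : ∀ c : Equiv.Perm (Fin N),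
        (∑ τ : Equiv.Perm (Fin N), if τ * g * τ⁻¹ = c then (1 : ℂ) else 0)
        = if c.cycleType = g.cycleType
          then (N.factorial : ℂ) /
            ((Finset.univ.filter fun γ : Equiv.Perm (Fin N) =>
                γ.cycleType = g.cycleType).card : ℂ)
          else 0 := by
      intro c
      by_cases hc : c.cycleType = g.cycleType
      · rw [if_pos hc, eq_div_iff (hKne _ rfl)]
        exact fiber_sum g c hc
      · rw [if_neg hc]
        apply Finset.sum_eq_zero
        intro τ _
        apply if_neg
        intro h
        exact hc (by rw [← h, Equiv.Perm.cycleType_conj])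
    simp only [key, cycleType_c]
    have e0 : ¬((0 : Multiset ℕ) = {2}) := by simp [eq_comm]
    have e0' : ¬((0 : Multiset ℕ) = {3}) := by simp [eq_comm]
    have e32 : ¬(({3} : Multiset ℕ) = {2}) := by simp
    have e23 : ¬(({2} : Multiset ℕ) = {3}) := by simp
    by_cases hg2 : g.cycleType = ({2} : Multiset ℕ)
    · rw [if_pos hg2]
      simp only [hg2]
      set V : ℂ := (N.factorial : ℂ) /
        ((Finset.univ.filter fun γ : Equiv.Perm (Fin N) =>
            γ.cycleType = ({2} : Multiset ℕ)).card : ℂ) with hV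
      have hpt : ∀ (r s : Fin (x.val + 1)),
          (if (if s = r then (0 : Multiset ℕ)
               else if s = Fin.last x.val ∨ r = Fin.last x.val then {2} else {3}) = {2}
           then V else 0)
          = V * (if ¬s = r ∧ (s = Fin.last x.val ∨ r = Fin.last x.val)
                 then (1 : ℂ) else 0) := by
        intro r s
        by_cases h1 : s = r
        · simp [h1, e0]
        · by_cases h2 : s = Fin.last x.val ∨ r = Fin.last x.val
          · simp [h1, h2]
          · simp [h1, h2, e32]
      simp only [hpt]
      simp only [← Finset.mul_sum]
      rw [Finset.sum_comm, count2]
      ring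
    · rw [if_neg hg2]
      by_cases hg3 : g.cycleType = ({3} : Multiset ℕ)
      · rw [if_pos hg3]
        simp only [hg3]
        set V : ℂ := (N.factorial : ℂ) /
          ((Finset.univ.filter fun γ : Equiv.Perm (Fin N) =>
              γ.cycleType = ({3} : Multiset ℕ)).card : ℂ) with hV
        have hpt : ∀ (r s : Fin (x.val + 1)),
            (if (if s = r then (0 : Multiset ℕ)
                 else if s = Fin.last x.val ∨ r = Fin.last x.val then {2} else {3}) = {3}
             then V else 0)
            = V * (if ¬s = r ∧ ¬(s = Fin.last x.val ∨ r = Fin.last x.val)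
                   then (1 : ℂ) else 0) := by
          intro r s
          by_cases h1 : s = r
          · simp [h1, e0']
          · by_cases h2 : s = Fin.last x.val ∨ r = Fin.last x.val
            · simp [h1, h2, e23]
            · simp [h1, h2]
        simp only [hpt]
        simp only [← Finset.mul_sum]
        rw [Finset.sum_comm, count3]
        ring
      · rw [if_neg hg3]
        apply Finset.sum_eq_zero
        intro r _
        apply Finset.sum_eq_zero
        intro s _
        apply if_neg
        intro h
        by_cases h1 : s = r
        · rw [if_pos h1] at h
          exact hg1 (Equiv.Perm.cycleType_eq_zero.1 h.symm)
        · rw [if_neg h1] at h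
          by_cases h2 : s = Fin.last x.val ∨ r = Fin.last x.val
          · rw [if_pos h2] at h
            exact hg2 h.symm
          · rw [if_neg h2] at h
            exact hg3 h.symm
theorem Wmat_apply {N : ℕ} (l : ℕ) (ρ π : Equiv.Perm (Fin N)) :
    Wmat l ρ π
      = (((Finset.univ.filter fun γ : Equiv.Perm (Fin N) =>
            γ.cycleType = ({l} : Multiset ℕ)).card : ℂ))⁻¹ *
        (if (ρ * π⁻¹).cycleType = ({l} : Multiset ℕ) then 1 else 0) := by
  classical
  have hfilter : (Finset.univ.filter fun γ : Equiv.Perm (Fin N) =>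
      γ.IsCycle ∧ γ.support.card = l)
      = Finset.univ.filter fun γ : Equiv.Perm (Fin N) => γ.cycleType = ({l} : Multiset ℕ) := by
    apply Finset.filter_congr
    intro γ _
    exact (cycleType_singleton_iff γ l).symm
  rw [Wmat, hfilter]
  rw [Matrix.smul_apply, Matrix.sum_apply, smul_eq_mul]
  congr 1
  have hcond : ∀ γ : Equiv.Perm (Fin N), (ρ = π * γ⁻¹) ↔ (γ = ρ⁻¹ * π) := by
    intro γ
    constructor
    · intro h
      rw [h]
      group
    · intro h
      rw [h]
      group
  have hterm : ∀ γ : Equiv.Perm (Fin N), Rmat γ ρ π = if γ = ρ⁻¹ * π then (1 : ℂ) else 0 := by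
    intro γ
    rw [Rmat]
    exact if_congr (hcond γ) rfl rfl
  rw [Finset.sum_congr rfl (fun γ _ => hterm γ)]
  rw [Finset.sum_ite_eq' (Finset.univ.filter fun γ : Equiv.Perm (Fin N) =>
      γ.cycleType = ({l} : Multiset ℕ)) (ρ⁻¹ * π) (fun _ => (1 : ℂ))]
  have hmem : (ρ⁻¹ * π ∈ Finset.univ.filter fun γ : Equiv.Perm (Fin N) =>
      γ.cycleType = ({l} : Multiset ℕ)) ↔ (ρ * π⁻¹).cycleType = ({l} : Multiset ℕ) := by
    rw [Finset.mem_filter]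
    have h1 : π⁻¹ * (ρ * π⁻¹) * (π⁻¹)⁻¹ = (ρ⁻¹ * π)⁻¹ := by group
    have h2 : (ρ⁻¹ * π).cycleType = (ρ * π⁻¹).cycleType := by
      rw [← Equiv.Perm.cycleType_inv (ρ⁻¹ * π), ← h1, Equiv.Perm.cycleType_conj]
    simp [h2]
  exact if_congr hmem rfl rfl

theorem inner_sum_eval {N : ℕ} (x : Fin N) (ρ π : Equiv.Perm (Fin N)) :
    (∑ σ : Equiv.Perm (Fin N), ∑ τ : Equiv.Perm (Fin N),
      ((Lmat τ * Rmat σ)ᴴ *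
        ((1 : Matrix (Equiv.Perm (Fin N)) (Equiv.Perm (Fin N)) ℂ) - PxPerm x) *
        (Lmat τ * Rmat σ)) ρ π)
    = (N.factorial : ℂ) ^ 2 * (if ρ = π then 1 else 0)
      - (∑ σ : Equiv.Perm (Fin N), ∑ τ : Equiv.Perm (Fin N),
          PxPerm x (τ * ρ * σ⁻¹) (τ * π * σ⁻¹)) := by
  classical
  have hterm : ∀ σ τ : Equiv.Perm (Fin N),
      ((Lmat τ * Rmat σ)ᴴ *
        ((1 : Matrix (Equiv.Perm (Fin N)) (Equiv.Perm (Fin N)) ℂ) - PxPerm x) *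
        (Lmat τ * Rmat σ)) ρ π
      = (if ρ = π then 1 else 0) - PxPerm x (τ * ρ * σ⁻¹) (τ * π * σ⁻¹) := by
    intro σ τ
    rw [LR_eq_U, conj_apply]
    rw [Matrix.sub_apply, Matrix.one_apply]
    congr 1
    apply if_congr _ rfl rfl
    rw [mul_left_inj, mul_right_inj]
  simp only [hterm]
  rw [Finset.sum_congr rfl (fun σ _ => Finset.sum_sub_distrib _ _), Finset.sum_sub_distrib]
  congr 1
  simp [Finset.sum_const, Finset.card_univ, Fintype.card_perm]
  ring

/-- `Γ = ((H_N − H_N^{(2)})/N) I − 2((H_N^{(2)} − H_N^{(3)})/N) W^{(2)}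
− ((H_N − 3H_N^{(2)} + 2H_N^{(3)})/N) W^{(3)}` on `ℓ²(S_N)`. -/
theorem stmt14 {N : ℕ} (hN : 3 ≤ N) :
    GammaM (N := N)
      = ((Hm N 1 - Hm N 2) / (N : ℂ)) •
            (1 : Matrix (Equiv.Perm (Fin N)) (Equiv.Perm (Fin N)) ℂ)
        - (2 * ((Hm N 2 - Hm N 3) / (N : ℂ))) • Wmat 2
        - ((Hm N 1 - 3 * Hm N 2 + 2 * Hm N 3) / (N : ℂ)) • Wmat 3 := by
  classical
  have hXne : ∀ x : Fin N, ((x.val : ℂ) + 1) ≠ 0 := fun x => Nat.cast_add_one_ne_zero x.val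
  have hfac : (N.factorial : ℂ) ≠ 0 := Nat.cast_ne_zero.2 (Nat.factorial_ne_zero N)
  have hNne : (N : ℂ) ≠ 0 := Nat.cast_ne_zero.2 (by omega)
  have hM : ∀ x : Fin N,
      ((Fintype.card (∀ j : {j : Fin N // j ≠ x}, Fin (j.val.val + 1)) : ℕ) : ℂ)
      = (N.factorial : ℂ) / ((x.val : ℂ) + 1) := by
    intro x
    rw [eq_div_iff (hXne x), mul_comm]
    exact_mod_cast congrArg (fun n : ℕ => (n : ℂ)) (card_rest x)
  have hK2 : (((Finset.univ.filter fun γ : Equiv.Perm (Fin N) =>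
      γ.cycleType = ({2} : Multiset ℕ)).card : ℕ) : ℂ) ≠ 0 := by
    apply Nat.cast_ne_zero.2
    apply Finset.card_ne_zero_of_mem
      (a := Equiv.swap (⟨0, by omega⟩ : Fin N) ⟨1, by omega⟩)
    simp only [Finset.mem_filter, Finset.mem_univ, true_and]
    have hne : (⟨0, by omega⟩ : Fin N) ≠ (⟨1, by omega⟩ : Fin N) := by
      intro h
      exact absurd (congrArg Fin.val h) (by norm_num)
    rw [(Equiv.Perm.isCycle_swap hne).cycleType, Equiv.Perm.card_support_swap hne]
  have hK3 : (((Finset.univ.filter fun γ : Equiv.Perm (Fin N) =>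
      γ.cycleType = ({3} : Multiset ℕ)).card : ℕ) : ℂ) ≠ 0 := by
    apply Nat.cast_ne_zero.2
    have hab : (⟨0, by omega⟩ : Fin N) ≠ (⟨1, by omega⟩ : Fin N) := by
      intro h; exact absurd (congrArg Fin.val h) (by norm_num)
    have hac : (⟨0, by omega⟩ : Fin N) ≠ (⟨2, by omega⟩ : Fin N) := by
      intro h; exact absurd (congrArg Fin.val h) (by norm_num)
    have hbc : (⟨1, by omega⟩ : Fin N) ≠ (⟨2, by omega⟩ : Fin N) := by
      intro h; exact absurd (congrArg Fin.val h) (by norm_num)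
    apply Finset.card_ne_zero_of_mem
      (a := Equiv.swap (⟨0, by omega⟩ : Fin N) (⟨1, by omega⟩ : Fin N) *
            Equiv.swap (⟨0, by omega⟩ : Fin N) (⟨2, by omega⟩ : Fin N))
    simp only [Finset.mem_filter, Finset.mem_univ, true_and]
    exact (Equiv.Perm.isThreeCycle_swap_mul_swap_same hab hac hbc).cycleType
  have hH : ∀ m : ℕ, (∑ x : Fin N, ((((x.val : ℂ)) + 1)⁻¹) ^ m) = Hm N m := by
    intro m
    rw [Hm, ← Fin.sum_univ_eq_sum_range (fun i => (((i : ℂ) + 1) ^ m)⁻¹) N]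
    exact Finset.sum_congr rfl (fun x _ => inv_pow _ _)
  have hX1 : ∀ x : Fin N, ((x.val : ℂ) + 1) * ((x.val : ℂ) + 1)⁻¹ = 1 :=
    fun x => mul_inv_cancel₀ (hXne x)
  have hF2 : ((N.factorial : ℂ)) ^ 2 * (((N.factorial : ℂ)) ^ 2)⁻¹ = 1 :=
    mul_inv_cancel₀ (pow_ne_zero 2 hfac)
  ext ρ π
  have hG : GammaM (N := N) ρ π
      = (N : ℂ)⁻¹ * ∑ x : Fin N, ((x.val : ℂ) + 1)⁻¹ *
          ((((N.factorial : ℂ)) ^ 2)⁻¹ *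
            ((N.factorial : ℂ) ^ 2 * (if ρ = π then 1 else 0)
              - ((N.factorial : ℂ) / ((x.val : ℂ) + 1)) *
                (((x.val : ℂ) + 1)⁻¹ *
                  (if (ρ * π⁻¹) = 1 then ((x.val : ℂ) + 1) * (N.factorial : ℂ)
                   else if (ρ * π⁻¹).cycleType = ({2} : Multiset ℕ) then
                     2 * (x.val : ℂ) * ((N.factorial : ℂ) /
                       (((Finset.univ.filter fun γ : Equiv.Perm (Fin N) =>
                          γ.cycleType = ({2} : Multiset ℕ)).card : ℕ) : ℂ))
                   else if (ρ * π⁻¹).cycleType = ({3} : Multiset ℕ) then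
                     (x.val : ℂ) * ((x.val : ℂ) - 1) * ((N.factorial : ℂ) /
                       (((Finset.univ.filter fun γ : Equiv.Perm (Fin N) =>
                          γ.cycleType = ({3} : Multiset ℕ)).card : ℕ) : ℂ))
                   else 0)))) := by
    rw [GammaM, Matrix.smul_apply, smul_eq_mul]
    congr 1
    rw [Matrix.sum_apply]
    apply Finset.sum_congr rfl
    intro x _
    rw [Matrix.smul_apply, smul_eq_mul]
    congr 1
    rw [Matrix.smul_apply, smul_eq_mul]
    congr 1
    rw [Matrix.sum_apply]
    rw [Finset.sum_congr rfl (fun σ (_ : σ ∈ Finset.univ) => Matrix.sum_apply ρ π Finset.univ _)]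
    rw [inner_sum_eval x ρ π, S_stage1 x ρ π, S_stage2 x (ρ * π⁻¹), hM x]
  rw [hG]
  rw [Matrix.sub_apply, Matrix.sub_apply, Matrix.smul_apply, Matrix.smul_apply,
    Matrix.smul_apply, Matrix.one_apply, Wmat_apply 2 ρ π, Wmat_apply 3 ρ π,
    smul_eq_mul, smul_eq_mul, smul_eq_mul]
  by_cases hd : ρ = π
  · have hg1 : ρ * π⁻¹ = 1 := by rw [hd]; group
    have hgc : (ρ * π⁻¹).cycleType = (0 : Multiset ℕ) := by
      rw [hg1]; exact Equiv.Perm.cycleType_one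
    have hc2 : ¬(ρ * π⁻¹).cycleType = ({2} : Multiset ℕ) := by rw [hgc]; simp [eq_comm]
    have hc3 : ¬(ρ * π⁻¹).cycleType = ({3} : Multiset ℕ) := by rw [hgc]; simp [eq_comm]
    simp only [if_pos hd, if_neg hc2, if_neg hc3, if_pos hg1]
    have hterm : ∀ x : Fin N,
        ((x.val : ℂ) + 1)⁻¹ *
          ((((N.factorial : ℂ)) ^ 2)⁻¹ *
            ((N.factorial : ℂ) ^ 2 * 1
              - ((N.factorial : ℂ) / ((x.val : ℂ) + 1)) *
                (((x.val : ℂ) + 1)⁻¹ * (((x.val : ℂ) + 1) * (N.factorial : ℂ)))))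
        = ((((x.val : ℂ)) + 1)⁻¹) ^ 1 - ((((x.val : ℂ)) + 1)⁻¹) ^ 2 := by
      intro x
      linear_combination ((((x.val : ℂ)) + 1)⁻¹
          - (((x.val : ℂ)) + 1) * ((((x.val : ℂ)) + 1)⁻¹) ^ 3) * hF2
        + (-((((x.val : ℂ)) + 1)⁻¹) ^ 2) * hX1 x
    rw [Finset.sum_congr rfl (fun x _ => hterm x), Finset.sum_sub_distrib, hH 1, hH 2]
    field_simp
    ring
  · have hg1 : ¬(ρ * π⁻¹ = 1) := by
      intro h
      exact hd (by rw [← mul_inv_eq_one]; exact h)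
    simp only [if_neg hd, if_neg hg1]
    by_cases h2 : (ρ * π⁻¹).cycleType = ({2} : Multiset ℕ)
    · have h3 : ¬(ρ * π⁻¹).cycleType = ({3} : Multiset ℕ) := by
        rw [h2]; simp
      simp only [if_pos h2, if_neg h3]
      have hterm : ∀ x : Fin N,
          ((x.val : ℂ) + 1)⁻¹ *
            ((((N.factorial : ℂ)) ^ 2)⁻¹ *
              ((N.factorial : ℂ) ^ 2 * 0
                - ((N.factorial : ℂ) / ((x.val : ℂ) + 1)) *
                  (((x.val : ℂ) + 1)⁻¹ *
                    (2 * (x.val : ℂ) * ((N.factorial : ℂ) /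
                      (((Finset.univ.filter fun γ : Equiv.Perm (Fin N) =>
                         γ.cycleType = ({2} : Multiset ℕ)).card : ℕ) : ℂ))))))
          = -(2 / (((Finset.univ.filter fun γ : Equiv.Perm (Fin N) =>
                γ.cycleType = ({2} : Multiset ℕ)).card : ℕ) : ℂ)) *
              (((((x.val : ℂ)) + 1)⁻¹) ^ 2 - ((((x.val : ℂ)) + 1)⁻¹) ^ 3) := by
        intro x
        linear_combination (-2 * ((x.val : ℂ)) * ((((x.val : ℂ)) + 1)⁻¹) ^ 3 *
            ((((Finset.univ.filter fun γ : Equiv.Perm (Fin N) =>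
              γ.cycleType = ({2} : Multiset ℕ)).card : ℕ) : ℂ))⁻¹) * hF2
          + (-2 * ((((Finset.univ.filter fun γ : Equiv.Perm (Fin N) =>
              γ.cycleType = ({2} : Multiset ℕ)).card : ℕ) : ℂ))⁻¹ *
              ((((x.val : ℂ)) + 1)⁻¹) ^ 2) * hX1 x
      rw [Finset.sum_congr rfl (fun x _ => hterm x), ← Finset.mul_sum,
        Finset.sum_sub_distrib, hH 2, hH 3]
      field_simp
      ring
    · by_cases h3 : (ρ * π⁻¹).cycleType = ({3} : Multiset ℕ)
      · simp only [if_neg h2, if_pos h3]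
        have hterm : ∀ x : Fin N,
            ((x.val : ℂ) + 1)⁻¹ *
              ((((N.factorial : ℂ)) ^ 2)⁻¹ *
                ((N.factorial : ℂ) ^ 2 * 0
                  - ((N.factorial : ℂ) / ((x.val : ℂ) + 1)) *
                    (((x.val : ℂ) + 1)⁻¹ *
                      ((x.val : ℂ) * ((x.val : ℂ) - 1) * ((N.factorial : ℂ) /
                        (((Finset.univ.filter fun γ : Equiv.Perm (Fin N) =>
                           γ.cycleType = ({3} : Multiset ℕ)).card : ℕ) : ℂ))))))
            = -((((Finset.univ.filter fun γ : Equiv.Perm (Fin N) =>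
                  γ.cycleType = ({3} : Multiset ℕ)).card : ℕ) : ℂ))⁻¹ *
                (((((x.val : ℂ)) + 1)⁻¹) ^ 1 - 3 * ((((x.val : ℂ)) + 1)⁻¹) ^ 2
                  + 2 * ((((x.val : ℂ)) + 1)⁻¹) ^ 3) := by
          intro x
          linear_combination (-(((x.val : ℂ)) * (((x.val : ℂ)) - 1)) *
              ((((x.val : ℂ)) + 1)⁻¹) ^ 3 *
              ((((Finset.univ.filter fun γ : Equiv.Perm (Fin N) =>
                γ.cycleType = ({3} : Multiset ℕ)).card : ℕ) : ℂ))⁻¹) * hF2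
            + (((((Finset.univ.filter fun γ : Equiv.Perm (Fin N) =>
                γ.cycleType = ({3} : Multiset ℕ)).card : ℕ) : ℂ))⁻¹ *
                (-((((x.val : ℂ)) + 1)⁻¹) ^ 2 * ((x.val : ℂ))
                  + 2 * ((((x.val : ℂ)) + 1)⁻¹) ^ 2 - (((x.val : ℂ)) + 1)⁻¹)) * hX1 x
        rw [Finset.sum_congr rfl (fun x _ => hterm x), ← Finset.mul_sum]
        rw [show (∑ x : Fin N, (((((x.val : ℂ)) + 1)⁻¹) ^ 1
            - 3 * ((((x.val : ℂ)) + 1)⁻¹) ^ 2 + 2 * ((((x.val : ℂ)) + 1)⁻¹) ^ 3))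
            = Hm N 1 - 3 * Hm N 2 + 2 * Hm N 3 by
          rw [Finset.sum_add_distrib, Finset.sum_sub_distrib, ← Finset.mul_sum,
            ← Finset.mul_sum, hH 1, hH 2, hH 3]]
        field_simp
        ring
      · simp only [if_neg h2, if_neg h3]
        have hterm : ∀ x : Fin N,
            ((x.val : ℂ) + 1)⁻¹ *
              ((((N.factorial : ℂ)) ^ 2)⁻¹ *
                ((N.factorial : ℂ) ^ 2 * 0
                  - ((N.factorial : ℂ) / ((x.val : ℂ) + 1)) *
                    (((x.val : ℂ) + 1)⁻¹ * 0))) = 0 := by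
          intro x
          ring
        rw [Finset.sum_congr rfl (fun x _ => hterm x)]
        simp
end

section
/- Fix x ∈ [N]. (a) If γ ∈ S_N satisfies γ(x) = x, then (I ⊗ R^γ) commutes with O^x, i.e., [I ⊗ R^γ, O^x] = 0. (b) The commutator norms satisfy ‖[I ⊗ W^{(2)}, O^x]‖ ≤ 4/N and ‖[I ⊗ W^{(3)}, O^x]‖ ≤ 6/N. -/
open scoped Classical
open Matrix

/-- The bounded operator on `ℓ²(ι)` (Euclidean space) associated with a matrix. -/
noncomputable def toCLM {ι : Type*} [Fintype ι] [DecidableEq ι] (M : Matrix ι ι ℂ) :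
    EuclideanSpace ℂ ι →L[ℂ] EuclideanSpace ℂ ι :=
  LinearMap.toContinuousLinearMap (Matrix.toEuclideanLin M)

/-- Bitwise XOR on `Fin (2^n)`, coming from the identification of `[N] = [2^n]`
with `{0,1}^n` via binary expansion. -/
def xorFin {n : ℕ} (a b : Fin (2 ^ n)) : Fin (2 ^ n) :=
  ⟨a.val ^^^ b.val, Nat.xor_lt_two_pow a.isLt b.isLt⟩

/-- The matrix of the unitary `O^x` on `ℂ^N ⊗ ℓ²(S_N)` determined by
`O^x (|y⟩ ⊗ |π⟩) = |y ⊕ π(x)⟩ ⊗ |π⟩` (with `N = 2^n`). -/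
noncomputable def OxM {n : ℕ} (x : Fin (2 ^ n)) :
    Matrix (Fin (2 ^ n) × Equiv.Perm (Fin (2 ^ n))) (Fin (2 ^ n) × Equiv.Perm (Fin (2 ^ n))) ℂ :=
  fun p q => if p.2 = q.2 ∧ p.1 = xorFin q.1 (q.2 x) then 1 else 0

noncomputable def permMat {ι : Type*} [DecidableEq ι] (e : Equiv.Perm ι) : Matrix ι ι ℂ :=
  fun i j => if i = e j then 1 else 0

lemma permMat_mul {ι : Type*} [Fintype ι] [DecidableEq ι] (e f : Equiv.Perm ι) :
    permMat e * permMat f = permMat (e * f) := by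
  ext i k
  rw [Matrix.mul_apply]
  simp only [permMat, ite_mul, one_mul, zero_mul]
  rw [Finset.sum_eq_single (f k)]
  · simp [Equiv.Perm.mul_apply]; congr
  · intro b _ hb; simp [hb]
  · simp

lemma toCLM_permMat_apply {ι : Type*} [Fintype ι] [DecidableEq ι] (e : Equiv.Perm ι)
    (v : EuclideanSpace ℂ ι) (i : ι) : toCLM (permMat e) v i = v (e⁻¹ i) := by
  have h : toCLM (permMat e) v i = ∑ j, permMat e i j * v j := rfl
  rw [h]
  simp only [permMat, ite_mul, one_mul, zero_mul]
  rw [Finset.sum_eq_single (e⁻¹ i)]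
  · simp
  · intro b _ hb
    rw [if_neg]
    intro hh
    exact hb (by simp [hh])
  · simp

lemma norm_toCLM_permMat {ι : Type*} [Fintype ι] [DecidableEq ι] (e : Equiv.Perm ι) :
    ‖toCLM (permMat e)‖ ≤ 1 := by
  apply ContinuousLinearMap.opNorm_le_bound _ zero_le_one
  intro v
  rw [one_mul, EuclideanSpace.norm_eq, EuclideanSpace.norm_eq]
  apply le_of_eq
  congr 1
  simp_rw [toCLM_permMat_apply]
  exact Equiv.sum_comp (e⁻¹ : Equiv.Perm ι) (fun i => ‖v i‖ ^ 2)

lemma xorFin_cancel {n : ℕ} (a b : Fin (2 ^ n)) : xorFin (xorFin a b) b = a := by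
  apply Fin.ext
  exact xor_cancel_right a.val b.val

/-- the permutation `(y, π) ↦ (y ⊕ π(x), π)` underlying `O^x`. -/

def oEquiv {n : ℕ} (x : Fin (2 ^ n)) :
    Equiv.Perm (Fin (2 ^ n) × Equiv.Perm (Fin (2 ^ n))) where
  toFun q := (xorFin q.1 (q.2 x), q.2)
  invFun q := (xorFin q.1 (q.2 x), q.2)
  left_inv q := by simp [xorFin_cancel]
  right_inv q := by simp [xorFin_cancel]

lemma OxM_eq {n : ℕ} (x : Fin (2 ^ n)) : OxM x = permMat (oEquiv x) := by
  ext p q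
  simp [OxM, permMat, oEquiv, Prod.ext_iff, and_comm]

/-- the permutation `π ↦ π γ⁻¹` underlying `R^γ`. -/

def rEquiv {N : ℕ} (γ : Equiv.Perm (Fin N)) : Equiv.Perm (Equiv.Perm (Fin N)) :=
  Equiv.mulRight γ⁻¹

lemma Rmat_eq {N : ℕ} (γ : Equiv.Perm (Fin N)) : Rmat γ = permMat (rEquiv γ) := by
  ext ρ π
  simp [Rmat, permMat, rEquiv]; congr

open scoped Kronecker in

lemma kron_one_permMat {ι₁ ι₂ : Type*} [DecidableEq ι₁] [DecidableEq ι₂]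
    (f : Equiv.Perm ι₂) :
    (1 : Matrix ι₁ ι₁ ℂ) ⊗ₖ permMat f
      = permMat ((Equiv.refl ι₁).prodCongr f) := by
  ext p q
  obtain ⟨i, j⟩ := p
  obtain ⟨k, l⟩ := q
  simp only [Matrix.kroneckerMap_apply, permMat, Matrix.one_apply, Equiv.prodCongr_apply,
    Prod.ext_iff, Equiv.refl_apply, Prod.map, ite_mul, one_mul, zero_mul]
  by_cases h : i = k <;> by_cases h2 : j = f l <;> simp [h, h2]

open scoped Kronecker in

lemma comm_of_fix {n : ℕ} (x : Fin (2 ^ n)) (γ : Equiv.Perm (Fin (2 ^ n))) (h : γ x = x) :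
    ((1 : Matrix (Fin (2 ^ n)) (Fin (2 ^ n)) ℂ) ⊗ₖ Rmat γ) * OxM x
      = OxM x * ((1 : Matrix (Fin (2 ^ n)) (Fin (2 ^ n)) ℂ) ⊗ₖ Rmat γ) := by
  have hinv : γ⁻¹ x = x := by
    conv_lhs => rw [← h]
    exact Equiv.symm_apply_apply γ x
  rw [Rmat_eq, kron_one_permMat, OxM_eq, permMat_mul, permMat_mul]
  have heq : ((Equiv.refl (Fin (2 ^ n))).prodCongr (rEquiv γ)) * oEquiv x
      = oEquiv x * ((Equiv.refl (Fin (2 ^ n))).prodCongr (rEquiv γ)) := by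
    apply Equiv.ext
    rintro ⟨y, π⟩
    simp only [Equiv.Perm.mul_apply]
    simp only [oEquiv, rEquiv, Equiv.prodCongr_apply, Prod.map, Equiv.coe_fn_mk,
      Equiv.refl_apply, Equiv.coe_mulRight]
    simp [Equiv.Perm.mul_apply, hinv]
  rw [heq]

lemma count_indep {N : ℕ} (l : ℕ) (y z : Fin N) :
    (Finset.univ.filter fun γ : Equiv.Perm (Fin N) =>
        γ.IsCycle ∧ γ.support.card = l ∧ γ y ≠ y).card
      = (Finset.univ.filter fun γ : Equiv.Perm (Fin N) =>
        γ.IsCycle ∧ γ.support.card = l ∧ γ z ≠ z).card := by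
  set σ := Equiv.swap y z
  apply Finset.card_bij (fun γ _ => σ * γ * σ⁻¹)
  · intro γ hγ
    simp only [Finset.mem_filter, Finset.mem_univ, true_and] at hγ ⊢
    obtain ⟨h1, h2, h3⟩ := hγ
    refine ⟨h1.conj, by simp [Equiv.Perm.card_support_conj, h2], ?_⟩
    have hz : σ⁻¹ z = y := by simp [σ, Equiv.swap_inv, Equiv.swap_apply_right]
    simp only [Equiv.Perm.mul_apply, hz]
    intro hc
    apply h3
    have := congrArg (fun t => σ⁻¹ t) hc
    simp only [show ∀ a, σ⁻¹ (σ a) = a from Equiv.symm_apply_apply σ] at this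
    rw [this, hz]
  · intro a _ b _ hab
    have h1 : σ * a * σ⁻¹ = σ * b * σ⁻¹ := hab
    exact mul_left_cancel (mul_right_cancel h1)
  · intro δ hδ
    refine ⟨σ⁻¹ * δ * σ, ?_, ?_⟩
    · simp only [Finset.mem_filter, Finset.mem_univ, true_and] at hδ ⊢
      obtain ⟨h1, h2, h3⟩ := hδ
      have hc : σ⁻¹ * δ * σ = σ⁻¹ * δ * (σ⁻¹)⁻¹ := by rw [inv_inv]
      refine ⟨by rw [hc]; exact h1.conj,
        by rw [hc, Equiv.Perm.card_support_conj]; exact h2, ?_⟩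
      have hy : σ y = z := Equiv.swap_apply_left y z
      simp only [Equiv.Perm.mul_apply, hy]
      intro hcon
      apply h3
      have := congrArg (fun t => σ t) hcon
      simp only [show ∀ a, σ (σ⁻¹ a) = a from Equiv.apply_symm_apply σ, hy] at this
      exact this
    · group

lemma count_mul {N : ℕ} (l : ℕ) (x : Fin N) :
    (Finset.univ.filter fun γ : Equiv.Perm (Fin N) =>
        γ.IsCycle ∧ γ.support.card = l ∧ γ x ≠ x).card * N
      = (Finset.univ.filter fun γ : Equiv.Perm (Fin N) =>
        γ.IsCycle ∧ γ.support.card = l).card * l := by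
  set S := Finset.univ.filter fun γ : Equiv.Perm (Fin N) =>
    γ.IsCycle ∧ γ.support.card = l with hS
  have h1 : S.card * l = ∑ γ ∈ S, γ.support.card := by
    rw [Finset.sum_congr rfl (fun γ hγ => (Finset.mem_filter.mp hγ).2.2)]
    rw [Finset.sum_const, smul_eq_mul, mul_comm]
  have h2 : ∀ γ : Equiv.Perm (Fin N),
      γ.support.card = ∑ y : Fin N, if γ y ≠ y then 1 else 0 := by
    intro γ
    rw [Equiv.Perm.support, Finset.card_filter]
  have h3 : ∀ y : Fin N, (∑ γ ∈ S, if γ y ≠ y then 1 else 0)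
      = (Finset.univ.filter fun γ : Equiv.Perm (Fin N) =>
          γ.IsCycle ∧ γ.support.card = l ∧ γ x ≠ x).card := by
    intro y
    rw [← Finset.card_filter, hS, Finset.filter_filter]
    have := count_indep (N := N) l y x
    rw [← this]
    congr 1
    apply Finset.filter_congr
    intro γ _
    tauto
  rw [h1]
  symm
  calc ∑ γ ∈ S, γ.support.card = ∑ γ ∈ S, ∑ y : Fin N, if γ y ≠ y then 1 else 0 := by
        exact Finset.sum_congr rfl fun γ _ => h2 γ
    _ = ∑ y : Fin N, ∑ γ ∈ S, if γ y ≠ y then 1 else 0 := Finset.sum_comm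
    _ = ∑ _y : Fin N, (Finset.univ.filter fun γ : Equiv.Perm (Fin N) =>
          γ.IsCycle ∧ γ.support.card = l ∧ γ x ≠ x).card := by
        exact Finset.sum_congr rfl fun y _ => h3 y
    _ = _ := by rw [Finset.sum_const, smul_eq_mul, Finset.card_univ, Fintype.card_fin, mul_comm]

lemma toCLM_entry {ι : Type*} [Fintype ι] [DecidableEq ι] (M : Matrix ι ι ℂ)
    (v : EuclideanSpace ℂ ι) (i : ι) : toCLM M v i = ∑ j, M i j * v j := rfl

lemma toCLM_smul {ι : Type*} [Fintype ι] [DecidableEq ι] (c : ℂ) (M : Matrix ι ι ℂ) :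
    toCLM (c • M) = c • toCLM M := by
  refine ContinuousLinearMap.ext fun v => PiLp.ext fun i => ?_
  have h1 : (c • toCLM M) v i = c * toCLM M v i := rfl
  rw [h1, toCLM_entry, toCLM_entry, Finset.mul_sum]
  exact Finset.sum_congr rfl fun j _ => by simp [mul_assoc]

lemma toCLM_sub {ι : Type*} [Fintype ι] [DecidableEq ι] (A B : Matrix ι ι ℂ) :
    toCLM (A - B) = toCLM A - toCLM B := by
  refine ContinuousLinearMap.ext fun v => PiLp.ext fun i => ?_
  have h1 : (toCLM A - toCLM B) v i = toCLM A v i - toCLM B v i := rfl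
  rw [h1, toCLM_entry, toCLM_entry, toCLM_entry, ← Finset.sum_sub_distrib]
  exact Finset.sum_congr rfl fun j _ => by simp [sub_mul]

lemma toCLM_sum {ι κ : Type*} [Fintype ι] [DecidableEq ι] (s : Finset κ)
    (f : κ → Matrix ι ι ℂ) : toCLM (∑ g ∈ s, f g) = ∑ g ∈ s, toCLM (f g) := by
  refine ContinuousLinearMap.ext fun v => PiLp.ext fun i => ?_
  have h1 : (∑ g ∈ s, toCLM (f g)) v i = ∑ g ∈ s, toCLM (f g) v i := by
    rw [ContinuousLinearMap.sum_apply]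
    exact (congrFun (WithLp.ofLp_sum _ _ _ _) i).trans (Finset.sum_apply _ _ _)
  rw [h1, toCLM_entry]
  simp_rw [toCLM_entry, Matrix.sum_apply, Finset.sum_mul]
  exact Finset.sum_comm

open scoped Kronecker in

lemma kron_one_sum {ι₁ ι₂ κ : Type*} [DecidableEq ι₁] [Fintype ι₂] (s : Finset κ)
    (B : κ → Matrix ι₂ ι₂ ℂ) :
    (1 : Matrix ι₁ ι₁ ℂ) ⊗ₖ (∑ g ∈ s, B g) = ∑ g ∈ s, (1 : Matrix ι₁ ι₁ ℂ) ⊗ₖ B g := by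
  ext p q
  simp [Matrix.kroneckerMap_apply, Finset.mul_sum, Matrix.sum_apply]

open scoped Kronecker in

lemma key_bound {n : ℕ} (x : Fin (2 ^ n)) (l : ℕ)
    (hm : (Finset.univ.filter fun γ : Equiv.Perm (Fin (2 ^ n)) =>
        γ.IsCycle ∧ γ.support.card = l).card ≠ 0) :
    ‖toCLM (((1 : Matrix (Fin (2 ^ n)) (Fin (2 ^ n)) ℂ) ⊗ₖ Wmat (N := 2 ^ n) l) * OxM x
        - OxM x * ((1 : Matrix (Fin (2 ^ n)) (Fin (2 ^ n)) ℂ) ⊗ₖ Wmat (N := 2 ^ n) l))‖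
      ≤ 2 * l / 2 ^ n := by
  set S := Finset.univ.filter fun γ : Equiv.Perm (Fin (2 ^ n)) =>
    γ.IsCycle ∧ γ.support.card = l with hS
  set T := S.filter fun γ => γ x ≠ x with hT
  set D := fun γ : Equiv.Perm (Fin (2 ^ n)) =>
    ((1 : Matrix (Fin (2 ^ n)) (Fin (2 ^ n)) ℂ) ⊗ₖ Rmat γ) * OxM x
      - OxM x * ((1 : Matrix (Fin (2 ^ n)) (Fin (2 ^ n)) ℂ) ⊗ₖ Rmat γ) with hD
  have hmat : ((1 : Matrix (Fin (2 ^ n)) (Fin (2 ^ n)) ℂ) ⊗ₖ Wmat (N := 2 ^ n) l) * OxM x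
      - OxM x * ((1 : Matrix (Fin (2 ^ n)) (Fin (2 ^ n)) ℂ) ⊗ₖ Wmat (N := 2 ^ n) l)
      = ((S.card : ℂ))⁻¹ • ∑ γ ∈ T, D γ := by
    have hsum : (∑ γ ∈ S, D γ) = ∑ γ ∈ T, D γ := by
      symm
      apply Finset.sum_subset (Finset.filter_subset _ _)
      intro γ hγS hγT
      have hfix : γ x = x := by
        by_contra hne
        exact hγT (Finset.mem_filter.mpr ⟨hγS, hne⟩)
      rw [hD]
      simp only
      rw [comm_of_fix x γ hfix, sub_self]
    rw [← hsum, Wmat, Matrix.kronecker_smul, kron_one_sum, Matrix.smul_mul, Matrix.mul_smul,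
      ← smul_sub, Finset.sum_mul, Finset.mul_sum, ← Finset.sum_sub_distrib]
  rw [hmat, toCLM_smul,
    norm_smul ((S.card : ℂ))⁻¹ (toCLM (∑ γ ∈ T, D γ))]
  have hnorm : ‖toCLM (∑ γ ∈ T, D γ)‖ ≤ 2 * T.card := by
    rw [toCLM_sum]
    refine le_trans (norm_sum_le _ _) ?_
    have hterm : ∀ γ ∈ T, ‖toCLM (D γ)‖ ≤ 2 := by
      intro γ _
      rw [hD]
      simp only
      rw [Rmat_eq, kron_one_permMat, OxM_eq, permMat_mul, permMat_mul, toCLM_sub]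
      refine le_trans (norm_sub_le _ _) ?_
      have := norm_toCLM_permMat ((Equiv.refl (Fin (2 ^ n))).prodCongr (rEquiv γ) * oEquiv x)
      have := norm_toCLM_permMat (oEquiv x * (Equiv.refl (Fin (2 ^ n))).prodCongr (rEquiv γ))
      linarith
    refine le_trans (Finset.sum_le_sum hterm) ?_
    rw [Finset.sum_const, nsmul_eq_mul, mul_comm]
  have hcount : (T.card : ℝ) * (2 ^ n : ℝ) = (S.card : ℝ) * l := by
    have := count_mul (N := 2 ^ n) l x
    have hTeq : T = Finset.univ.filter fun γ : Equiv.Perm (Fin (2 ^ n)) =>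
        γ.IsCycle ∧ γ.support.card = l ∧ γ x ≠ x := by
      rw [hT, hS, Finset.filter_filter]
      apply Finset.filter_congr
      intro γ _
      tauto
    rw [hTeq, hS]
    exact_mod_cast this
  have hm' : (0 : ℝ) < (S.card : ℝ) := by
    have : 0 < S.card := Nat.pos_of_ne_zero hm
    exact_mod_cast this
  have hN : (0 : ℝ) < (2 : ℝ) ^ n := by positivity
  have h1 : ‖((S.card : ℂ))⁻¹‖ = ((S.card : ℝ))⁻¹ := by
    rw [norm_inv]
    norm_num
  rw [h1]
  calc ((S.card : ℝ))⁻¹ * ‖toCLM (∑ γ ∈ T, D γ)‖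
      ≤ ((S.card : ℝ))⁻¹ * (2 * T.card) := by
        apply mul_le_mul_of_nonneg_left hnorm
        positivity
    _ = 2 * T.card / S.card := by ring
    _ ≤ 2 * l / 2 ^ n := by
        rw [div_le_div_iff₀ hm' hN]
        nlinarith [hcount]

open scoped Kronecker in

open scoped Kronecker in
/-- Fix `x ∈ [N]` (`N = 2^n`).  (a) If `γ(x) = x` then `I ⊗ R^γ`
commutes with `O^x`.  (b) `‖[I ⊗ W^{(2)}, O^x]‖ ≤ 4/N` and `‖[I ⊗ W^{(3)}, O^x]‖ ≤ 6/N`. -/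
theorem stmt16 {n : ℕ} (hn : 2 ≤ n) (x : Fin (2 ^ n)) :
    (∀ γ : Equiv.Perm (Fin (2 ^ n)), γ x = x →
        ((1 : Matrix (Fin (2 ^ n)) (Fin (2 ^ n)) ℂ) ⊗ₖ Rmat γ) * OxM x
          - OxM x * ((1 : Matrix (Fin (2 ^ n)) (Fin (2 ^ n)) ℂ) ⊗ₖ Rmat γ) = 0)
    ∧ ‖toCLM (((1 : Matrix (Fin (2 ^ n)) (Fin (2 ^ n)) ℂ) ⊗ₖ Wmat (N := 2 ^ n) 2) * OxM x
        - OxM x * ((1 : Matrix (Fin (2 ^ n)) (Fin (2 ^ n)) ℂ) ⊗ₖ Wmat (N := 2 ^ n) 2))‖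
        ≤ 4 / (2 : ℝ) ^ n
    ∧ ‖toCLM (((1 : Matrix (Fin (2 ^ n)) (Fin (2 ^ n)) ℂ) ⊗ₖ Wmat (N := 2 ^ n) 3) * OxM x
        - OxM x * ((1 : Matrix (Fin (2 ^ n)) (Fin (2 ^ n)) ℂ) ⊗ₖ Wmat (N := 2 ^ n) 3))‖
        ≤ 6 / (2 : ℝ) ^ n := by
  have h4 : 4 ≤ 2 ^ n := by
    calc 4 = 2 ^ 2 := by norm_num
      _ ≤ 2 ^ n := Nat.pow_le_pow_right (by norm_num) hn
  set a : Fin (2 ^ n) := ⟨0, by omega⟩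
  set b : Fin (2 ^ n) := ⟨1, by omega⟩
  set c : Fin (2 ^ n) := ⟨2, by omega⟩
  have hab : a ≠ b := by simp [a, b, Fin.ext_iff]
  have hac : a ≠ c := by simp [a, c, Fin.ext_iff]
  have hbc : b ≠ c := by simp [b, c, Fin.ext_iff]
  refine ⟨fun γ h => by rw [comm_of_fix x γ h, sub_self], ?_, ?_⟩
  · have hm : (Finset.univ.filter fun γ : Equiv.Perm (Fin (2 ^ n)) =>
        γ.IsCycle ∧ γ.support.card = 2).card ≠ 0 := by
      rw [← Nat.pos_iff_ne_zero]
      apply Finset.card_pos.mpr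
      exact ⟨Equiv.swap a b, Finset.mem_filter.mpr ⟨Finset.mem_univ _,
        Equiv.Perm.isCycle_swap hab, Equiv.Perm.card_support_swap hab⟩⟩
    have := key_bound x 2 hm
    calc _ ≤ 2 * (2 : ℝ) / 2 ^ n := this
      _ = 4 / (2 : ℝ) ^ n := by norm_num
  · have hm : (Finset.univ.filter fun γ : Equiv.Perm (Fin (2 ^ n)) =>
        γ.IsCycle ∧ γ.support.card = 3).card ≠ 0 := by
      rw [← Nat.pos_iff_ne_zero]
      apply Finset.card_pos.mpr
      have h3 := Equiv.Perm.isThreeCycle_swap_mul_swap_same hab hac hbc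
      exact ⟨Equiv.swap a b * Equiv.swap a c, Finset.mem_filter.mpr ⟨Finset.mem_univ _,
        h3.isCycle, h3.card_support⟩⟩
    have := key_bound x 3 hm
    calc _ ≤ 2 * (3 : ℝ) / 2 ^ n := this
      _ = 6 / (2 : ℝ) ^ n := by norm_num
end

section
/- Let c ∈ {1,…,2n}. For every q ≥ 1 and every quantum query algorithm with access to a random permutation π of {0,1}^{2n} and its inverse, making fewer than q queries and outputting x ∈ {0,1}^{2n−c} (the first 2n−c bits of the measured X register), the average probability of double-sided zero search success satisfies (1/N!) ∑_{π ∈ S_N} ∑_{x ∈ {0,1}^{2n−c} : ∃ y ∈ {0,1}^{2n−c}, π(x‖0^c) = y‖0^c} Pr_π[x] ≤ 1828 · q³ · (n + 1) / 2^c, where N = 2^{2n}. In particular, for c = n this confirms Unruh's double-sided zero-search conjecture with bound 1828 · q³ · (n+1)/2^n. -/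
open scoped Classical Kronecker

/-- Bitwise XOR on bit strings `{0,1}^m`. -/
def bxor {m : ℕ} (a b : Fin m → Bool) : Fin m → Bool := fun i => xor (a i) (b i)

/-- The matrix of the oracle unitary `U^π` on `ℂ^N ⊗ ℂ^N` (with basis `{0,1}^m`),
determined by `U^π|x,y⟩ = |x, y ⊕ π(x)⟩`. -/
noncomputable def oracleM {m : ℕ} (π : Equiv.Perm (Fin m → Bool)) :
    Matrix ((Fin m → Bool) × (Fin m → Bool)) ((Fin m → Bool) × (Fin m → Bool)) ℂ :=
  fun p q => if p.1 = q.1 ∧ p.2 = bxor q.2 (π q.1) then 1 else 0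

/-- A quantum query algorithm making `q'` queries to a permutation of `{0,1}^m` and its
inverse: a finite workspace register `W` with a distinguished element `w0`, unitaries
`U⁽⁰⁾, …, U^{(q')}` on `ℂ^W ⊗ ℂ^N ⊗ ℂ^N`, and for each query a direction (forward or
inverse). -/
structure QueryAlg (m : ℕ) (q' : ℕ) where
  /-- the workspace index set -/
  W : Type
  [fW : Fintype W]
  [dW : DecidableEq W]
  /-- the distinguished initial workspace basis element -/
  w0 : W
  /-- the oracle-independent unitaries -/
  U : Fin (q' + 1) → Matrix (W × (Fin m → Bool) × (Fin m → Bool))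
      (W × (Fin m → Bool) × (Fin m → Bool)) ℂ
  unitary : ∀ j, U j ∈ Matrix.unitaryGroup (W × (Fin m → Bool) × (Fin m → Bool)) ℂ
  /-- direction of each query: `true` = forward, `false` = inverse -/
  fwd : Fin q' → Bool

attribute [instance] QueryAlg.fW QueryAlg.dW

/-- The final state `|ψ_π⟩ = U^{(q')} (I_W ⊗ O_{q'}) ⋯ (I_W ⊗ O_1) U⁽⁰⁾ |w0, 0, 0⟩`,
where `O_j = U^π` for a forward query and `O_j = U^{π⁻¹}` for an inverse query. -/
noncomputable def finalState {m q' : ℕ} (A : QueryAlg m q') (π : Equiv.Perm (Fin m → Bool)) :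
    A.W × (Fin m → Bool) × (Fin m → Bool) → ℂ :=
  (((List.ofFn fun j : Fin q' =>
        A.U j.succ *
          ((1 : Matrix A.W A.W ℂ) ⊗ₖ oracleM (if A.fwd j then π else π⁻¹))).reverse.prod
      * A.U 0).mulVec
    fun p => if p = (A.w0, fun _ => false, fun _ => false) then 1 else 0)

/-- `x ‖ z`: concatenation of `x ∈ {0,1}^{m−c}` with `z ∈ {0,1}^c`, viewed as an element of
`{0,1}^m` (the first `m−c` bits are `x`). -/
def padZ {m c : ℕ} (h : c ≤ m) (x : Fin (m - c) → Bool) (z : Fin c → Bool) : Fin m → Bool :=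
  fun i => Fin.append x z (Fin.cast (Nat.sub_add_cancel h).symm i)

/-- `Pr_π[x]`: the probability that the algorithm outputs the bit string
`x ∈ {0,1}^{m−c}` (the first `m−c` bits of the measured `X` register):
`∑_{w} ∑_{x″ ∈ {0,1}^c} ∑_{y′} |⟨w, x‖x″, y′|ψ_π⟩|²`. -/
noncomputable def outProbPrefix {m c q' : ℕ} (h : c ≤ m) (A : QueryAlg m q')
    (π : Equiv.Perm (Fin m → Bool)) (x : Fin (m - c) → Bool) : ℝ :=
  ∑ w : A.W, ∑ z : Fin c → Bool, ∑ y : Fin m → Bool,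
    ‖finalState A π (w, padZ h x z, y)‖ ^ 2


namespace Stmt19

/-! ### ℓ² machinery -/

section L2
variable {ι : Type*} [Fintype ι]

noncomputable def nsq (v : ι → ℂ) : ℝ := ∑ i, ‖v i‖^2

noncomputable def l2 (v : ι → ℂ) : ℝ := Real.sqrt (nsq v)

lemma nsq_nonneg (v : ι → ℂ) : 0 ≤ nsq v :=
  Finset.sum_nonneg fun _ _ => sq_nonneg _

lemma l2_sq (v : ι → ℂ) : l2 v ^ 2 = nsq v := Real.sq_sqrt (nsq_nonneg v)

lemma l2_nonneg (v : ι → ℂ) : 0 ≤ l2 v := Real.sqrt_nonneg _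

lemma l2_eq_norm (v : ι → ℂ) : l2 v = ‖(WithLp.equiv 2 (ι → ℂ)).symm v‖ := by
  rw [EuclideanSpace.norm_eq]; rfl

lemma l2_add_le (v w : ι → ℂ) : l2 (v + w) ≤ l2 v + l2 w := by
  rw [l2_eq_norm, l2_eq_norm, l2_eq_norm]
  have : (WithLp.equiv 2 (ι → ℂ)).symm (v + w)
      = (WithLp.equiv 2 (ι → ℂ)).symm v + (WithLp.equiv 2 (ι → ℂ)).symm w := rfl
  rw [this]; exact norm_add_le _ _

lemma l2_mono {v w : ι → ℂ} (hvw : nsq v ≤ nsq w) : l2 v ≤ l2 w :=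
  Real.sqrt_le_sqrt hvw

lemma l2_zero_of (v : ι → ℂ) (hv : v = 0) : l2 v = 0 := by
  subst hv
  have : nsq (0 : ι → ℂ) = 0 := by simp [nsq]
  rw [l2, this, Real.sqrt_zero]

lemma star_dot (v : ι → ℂ) : dotProduct (star v) v = (nsq v : ℂ) := by
  unfold dotProduct nsq
  push_cast
  refine Finset.sum_congr rfl fun i _ => ?_
  rw [Pi.star_apply, Complex.star_def, mul_comm, Complex.mul_conj']

lemma nsq_mulVec_unitary {ι : Type*} [Fintype ι] [DecidableEq ι]
    {U : Matrix ι ι ℂ} (hU : U ∈ Matrix.unitaryGroup ι ℂ)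
    (v : ι → ℂ) : nsq (U.mulVec v) = nsq v := by
  have h1 : dotProduct (star (U.mulVec v)) (U.mulVec v)
      = dotProduct (star v) v := by
    rw [Matrix.star_mulVec, Matrix.dotProduct_mulVec, Matrix.vecMul_vecMul,
      show U.conjTranspose * U = 1 by
        rw [← Matrix.star_eq_conjTranspose]; exact Matrix.mem_unitaryGroup_iff'.mp hU,
      Matrix.vecMul_one]
  have := (star_dot (U.mulVec v)).symm.trans (h1.trans (star_dot v))
  exact_mod_cast this

end L2

/-! ### bxor basics -/

lemma bxor_bxor (a b : Fin m → Bool) : bxor (bxor a b) b = a := by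
  funext i; simp [bxor, Bool.xor_assoc]

lemma bxor_eq_iff (a b v : Fin m → Bool) : a = bxor b v ↔ b = bxor a v := by
  constructor <;> rintro rfl <;> rw [bxor_bxor]

/-- The involutive equiv `y ↦ y ⊕ v` on bit strings. -/
def bxorEquiv (v : Fin m → Bool) : (Fin m → Bool) ≃ (Fin m → Bool) where
  toFun y := bxor y v
  invFun y := bxor y v
  left_inv y := bxor_bxor y v
  right_inv y := bxor_bxor y v

/-! ### the oracle action -/

variable {m q' : ℕ}

lemma oracle_mulVec (A : QueryAlg m q') (π : Equiv.Perm (Fin m → Bool))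
    (φ : A.W × (Fin m → Bool) × (Fin m → Bool) → ℂ)
    (w : A.W) (u y : Fin m → Bool) :
    (((1 : Matrix A.W A.W ℂ) ⊗ₖ oracleM π).mulVec φ) (w, u, y)
      = φ (w, u, bxor y (π u)) := by
  classical
  unfold Matrix.mulVec dotProduct
  rw [Finset.sum_eq_single ((w, u, bxor y (π u)) : A.W × (Fin m → Bool) × (Fin m → Bool))]
  · simp [Matrix.kroneckerMap_apply, oracleM, Matrix.one_apply, bxor_bxor]
  · rintro ⟨w', u', y'⟩ - hp
    simp only [Matrix.kroneckerMap_apply, oracleM, Matrix.one_apply]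
    by_cases h1 : w = w'
    · by_cases h2 : u = u' ∧ y = bxor y' (π u')
      · exfalso; apply hp
        obtain ⟨h2a, h2b⟩ := h2
        subst h1; subst h2a
        rw [bxor_eq_iff] at h2b
        rw [← h2b]
      · simp [h2]
    · simp [h1]
  · intro h; exact absurd (Finset.mem_univ _) h

lemma nsq_oracle (A : QueryAlg m q') (π : Equiv.Perm (Fin m → Bool))
    (φ : A.W × (Fin m → Bool) × (Fin m → Bool) → ℂ) :
    nsq (((1 : Matrix A.W A.W ℂ) ⊗ₖ oracleM π).mulVec φ) = nsq φ := by
  have hinv : Function.Involutive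
      (fun s : A.W × (Fin m → Bool) × (Fin m → Bool) =>
        (s.1, s.2.1, bxor s.2.2 (π s.2.1))) := by
    rintro ⟨w, u, y⟩; simp [bxor_bxor]
  have h1 : nsq (((1 : Matrix A.W A.W ℂ) ⊗ₖ oracleM π).mulVec φ)
      = ∑ s : A.W × (Fin m → Bool) × (Fin m → Bool),
          ‖φ (hinv.toPerm _ s)‖ ^ 2 := by
    unfold nsq
    refine Finset.sum_congr rfl ?_
    rintro ⟨w, u, y⟩ -
    rw [oracle_mulVec]
    rfl
  rw [h1, Equiv.sum_comp (hinv.toPerm _) (fun s => ‖φ s‖ ^ 2)]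
  rfl

end Stmt19

namespace Stmt19
variable {m q' : ℕ}

/-- The state space of the algorithm. -/
abbrev St (A : QueryAlg m q') := A.W × (Fin m → Bool) × (Fin m → Bool)

/-- The `j`-th step matrix (unitary then oracle), `1` beyond `q'`. -/
noncomputable def stepM (A : QueryAlg m q') (π : Equiv.Perm (Fin m → Bool)) (j : ℕ) :
    Matrix (St A) (St A) ℂ :=
  if h : j < q' then
    A.U (⟨j, h⟩ : Fin q').succ *
      ((1 : Matrix A.W A.W ℂ) ⊗ₖ oracleM (if A.fwd ⟨j, h⟩ then π else π⁻¹))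
  else 1

/-- Initial vector `|w0,0,0⟩`. -/
noncomputable def e0 (A : QueryAlg m q') : St A → ℂ :=
  fun p => if p = (A.w0, fun _ => false, fun _ => false) then 1 else 0

/-- State after `j` steps. -/
noncomputable def stateAt (A : QueryAlg m q') (π : Equiv.Perm (Fin m → Bool)) :
    ℕ → (St A → ℂ)
  | 0 => (A.U 0).mulVec (e0 A)
  | (j+1) => (stepM A π j).mulVec (stateAt A π j)

lemma finalState_eq (A : QueryAlg m q') (π : Equiv.Perm (Fin m → Bool)) :
    finalState A π = stateAt A π q' := by
  have key : ∀ (k : ℕ) (g : ℕ → Matrix (St A) (St A) ℂ) (v : St A → ℂ),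
      ((List.ofFn fun j : Fin k => g j).reverse.prod).mulVec v
        = Nat.rec v (fun j w' => (g j).mulVec w') k := by
    intro k g
    induction k with
    | zero => intro v; simp [Matrix.one_mulVec]
    | succ k ih =>
      intro v
      rw [List.ofFn_succ']
      show (((List.ofFn fun j : Fin k => g ↑j.castSucc).concat
          (g ↑(Fin.last k))).reverse.prod).mulVec v = _
      rw [List.concat_eq_append, List.reverse_append, List.reverse_singleton,
        List.singleton_append, List.prod_cons, ← Matrix.mulVec_mulVec]
      have hfn : (List.ofFn fun j : Fin k => g ↑j.castSucc)
          = List.ofFn fun j : Fin k => g ↑j := by congr 1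
      rw [hfn, ih v, Fin.val_last]
  have hst : ∀ k, stateAt A π k
      = Nat.rec ((A.U 0).mulVec (e0 A)) (fun j w' => (stepM A π j).mulVec w') k := by
    intro k
    induction k with
    | zero => rfl
    | succ k ih => show (stepM A π k).mulVec _ = _ ; rw [ih]
  have hfn2 : (List.ofFn fun j : Fin q' =>
        A.U j.succ * ((1 : Matrix A.W A.W ℂ) ⊗ₖ oracleM (if A.fwd j then π else π⁻¹)))
      = List.ofFn fun j : Fin q' => stepM A π ↑j := by
    congr 1
    funext j
    rw [stepM, dif_pos j.isLt, Fin.eta]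
  show (((List.ofFn fun j : Fin q' =>
        A.U j.succ * ((1 : Matrix A.W A.W ℂ) ⊗ₖ oracleM (if A.fwd j then π else π⁻¹)))
      |>.reverse.prod) * A.U 0).mulVec (e0 A) = _
  rw [hfn2, ← Matrix.mulVec_mulVec, key q' (stepM A π) ((A.U 0).mulVec (e0 A)), hst q']

lemma nsq_e0 (A : QueryAlg m q') : nsq (e0 A) = 1 := by
  unfold nsq e0
  rw [Finset.sum_eq_single ((A.w0, fun _ => false, fun _ => false) : St A)]
  · simp
  · intro p _ hp; simp [hp]
  · intro h; exact absurd (Finset.mem_univ _) h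

lemma nsq_stepM (A : QueryAlg m q') (π : Equiv.Perm (Fin m → Bool)) (j : ℕ)
    (v : St A → ℂ) : nsq ((stepM A π j).mulVec v) = nsq v := by
  unfold stepM
  split
  · rw [← Matrix.mulVec_mulVec, nsq_mulVec_unitary (A.unitary _), nsq_oracle]
  · rw [Matrix.one_mulVec]

lemma nsq_stateAt (A : QueryAlg m q') (π : Equiv.Perm (Fin m → Bool)) (k : ℕ) :
    nsq (stateAt A π k) = 1 := by
  induction k with
  | zero => show nsq ((A.U 0).mulVec (e0 A)) = 1
            rw [nsq_mulVec_unitary (A.unitary 0), nsq_e0]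
  | succ k ih => show nsq ((stepM A π k).mulVec _) = 1
                 rw [nsq_stepM, ih]

end Stmt19

namespace Stmt19
variable {m q' : ℕ}

/-- Query weight of a state on input `u` (X register). -/
noncomputable def wt (A : QueryAlg m q') (φ : St A → ℂ) (u : Fin m → Bool) : ℝ :=
  ∑ w : A.W, ∑ y : Fin m → Bool, ‖φ (w, u, y)‖^2

lemma wt_nonneg (A : QueryAlg m q') (φ : St A → ℂ) (u : Fin m → Bool) :
    0 ≤ wt A φ u :=
  Finset.sum_nonneg fun _ _ => Finset.sum_nonneg fun _ _ => sq_nonneg _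

lemma sum_wt (A : QueryAlg m q') (φ : St A → ℂ) :
    ∑ u : Fin m → Bool, wt A φ u = nsq φ := by
  unfold wt nsq
  rw [Fintype.sum_prod_type]
  simp_rw [Fintype.sum_prod_type]
  exact Finset.sum_comm

lemma sum_wt_injOn {ι : Type*} (A : QueryAlg m q') (φ : St A → ℂ)
    (s : Finset ι) (f : ι → (Fin m → Bool))
    (hf : ∀ x ∈ s, ∀ y ∈ s, f x = f y → x = y) :
    ∑ i ∈ s, wt A φ (f i) ≤ nsq φ := by
  rw [← Finset.sum_image (g := f) hf, ← sum_wt A φ]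
  exact Finset.sum_le_sum_of_subset_of_nonneg (Finset.subset_univ _)
    (fun u _ _ => wt_nonneg A φ u)

lemma nsq_oracle_diff (A : QueryAlg m q') (π ρ : Equiv.Perm (Fin m → Bool))
    (a b : Fin m → Bool) (hag : ∀ u, u ≠ a → u ≠ b → π u = ρ u) (φ : St A → ℂ) :
    nsq ((((1 : Matrix A.W A.W ℂ) ⊗ₖ oracleM π).mulVec φ)
          - (((1 : Matrix A.W A.W ℂ) ⊗ₖ oracleM ρ).mulVec φ))
      ≤ 4 * (wt A φ a + wt A φ b) := by
  classical
  set g : (Fin m → Bool) → ℝ := fun u => ∑ w : A.W, ∑ y : Fin m → Bool,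
    ‖φ (w, u, bxor y (π u)) - φ (w, u, bxor y (ρ u))‖^2 with hg
  have hnsq : nsq ((((1 : Matrix A.W A.W ℂ) ⊗ₖ oracleM π).mulVec φ)
          - (((1 : Matrix A.W A.W ℂ) ⊗ₖ oracleM ρ).mulVec φ)) = ∑ u, g u := by
    unfold nsq
    rw [Fintype.sum_prod_type]
    simp_rw [Fintype.sum_prod_type]
    rw [Finset.sum_comm]
    refine Finset.sum_congr rfl fun u _ => Finset.sum_congr rfl fun w _ =>
      Finset.sum_congr rfl fun y _ => ?_
    rw [Pi.sub_apply, oracle_mulVec, oracle_mulVec]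
  have hg0 : ∀ u, u ≠ a → u ≠ b → g u = 0 := by
    intro u ha hb
    rw [hg]
    simp only [hag u ha hb, sub_self, norm_zero]
    simp
  have hgnn : ∀ u, 0 ≤ g u := fun u =>
    Finset.sum_nonneg fun _ _ => Finset.sum_nonneg fun _ _ => sq_nonneg _
  have hgle : ∀ u, g u ≤ 4 * wt A φ u := by
    intro u
    have h1 : g u ≤ ∑ w : A.W, ∑ y : Fin m → Bool,
        (2 * ‖φ (w, u, bxor y (π u))‖^2 + 2 * ‖φ (w, u, bxor y (ρ u))‖^2) := by
      refine Finset.sum_le_sum fun w _ => Finset.sum_le_sum fun y _ => ?_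
      have ht := norm_sub_le (φ (w, u, bxor y (π u))) (φ (w, u, bxor y (ρ u)))
      have ht2 : ‖φ (w, u, bxor y (π u)) - φ (w, u, bxor y (ρ u))‖^2
          ≤ (‖φ (w, u, bxor y (π u))‖ + ‖φ (w, u, bxor y (ρ u))‖)^2 :=
        pow_le_pow_left₀ (norm_nonneg _) ht 2
      nlinarith [ht2, sq_nonneg (‖φ (w, u, bxor y (π u))‖ - ‖φ (w, u, bxor y (ρ u))‖)]
    have h2 : ∀ (v : Equiv.Perm (Fin m → Bool)), (∑ w : A.W, ∑ y : Fin m → Bool,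
        ‖φ (w, u, bxor y (v u))‖^2) = wt A φ u := by
      intro v
      refine Finset.sum_congr rfl fun w _ => ?_
      exact Equiv.sum_comp (bxorEquiv (v u)) (fun y => ‖φ (w, u, y)‖^2)
    calc g u ≤ _ := h1
      _ = 2 * (∑ w : A.W, ∑ y, ‖φ (w, u, bxor y (π u))‖^2)
          + 2 * (∑ w : A.W, ∑ y, ‖φ (w, u, bxor y (ρ u))‖^2) := by
            simp_rw [Finset.sum_add_distrib, Finset.mul_sum]
      _ = 4 * wt A φ u := by rw [h2 π, h2 ρ]; ring
  rw [hnsq]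
  by_cases hab : a = b
  · subst hab
    rw [Finset.sum_eq_single a (fun u _ hu => hg0 u hu hu) (fun h => absurd (Finset.mem_univ _) h)]
    have := hgle a
    have := wt_nonneg A φ a
    linarith
  · have hsub : ∑ u, g u = ∑ u ∈ ({a, b} : Finset (Fin m → Bool)), g u := by
      refine (Finset.sum_subset (Finset.subset_univ _) fun u _ hu => ?_).symm
      rw [Finset.mem_insert, Finset.mem_singleton] at hu
      push_neg at hu
      exact hg0 u hu.1 hu.2
    rw [hsub, Finset.sum_pair hab]
    have := hgle a; have := hgle b
    linarith

lemma telescope (A : QueryAlg m q') (π ρ : Equiv.Perm (Fin m → Bool)) (k : ℕ) :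
    l2 (stateAt A π k - stateAt A ρ k)
      ≤ ∑ j ∈ Finset.range k,
          l2 ((stepM A π j).mulVec (stateAt A ρ j) - (stepM A ρ j).mulVec (stateAt A ρ j)) := by
  induction k with
  | zero =>
    rw [Finset.sum_range_zero]
    apply le_of_eq
    apply l2_zero_of
    show (A.U 0).mulVec (e0 A) - (A.U 0).mulVec (e0 A) = 0
    exact sub_self _
  | succ k ih =>
    rw [Finset.sum_range_succ]
    have hdec : stateAt A π (k+1) - stateAt A ρ (k+1)
        = (stepM A π k).mulVec (stateAt A π k - stateAt A ρ k)
          + ((stepM A π k).mulVec (stateAt A ρ k) - (stepM A ρ k).mulVec (stateAt A ρ k)) := by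
      show (stepM A π k).mulVec (stateAt A π k) - (stepM A ρ k).mulVec (stateAt A ρ k) = _
      rw [Matrix.mulVec_sub]
      abel
    rw [hdec]
    refine le_trans (l2_add_le _ _) ?_
    have h1 : l2 ((stepM A π k).mulVec (stateAt A π k - stateAt A ρ k))
        = l2 (stateAt A π k - stateAt A ρ k) := by
      unfold l2; rw [nsq_stepM]
    rw [h1]
    linarith

/-- The relevant per-query weight for the pair-swap hybrid. -/
noncomputable def qw (A : QueryAlg m q') (ρ : Equiv.Perm (Fin m → Bool))
    (v1 v2 w1 w2 : Fin m → Bool) (j : ℕ) : ℝ :=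
  if hj : j < q' then
    (if A.fwd ⟨j, hj⟩ then wt A (stateAt A ρ j) v1 + wt A (stateAt A ρ j) v2
     else wt A (stateAt A ρ j) w1 + wt A (stateAt A ρ j) w2)
  else 0

lemma qw_nonneg (A : QueryAlg m q') (ρ : Equiv.Perm (Fin m → Bool))
    (v1 v2 w1 w2 : Fin m → Bool) (j : ℕ) : 0 ≤ qw A ρ v1 v2 w1 w2 j := by
  unfold qw
  split
  · split <;> exact add_nonneg (wt_nonneg _ _ _) (wt_nonneg _ _ _)
  · exact le_refl 0
end Stmt19

namespace Stmt19
variable {m q' : ℕ}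

lemma step_diff_le (A : QueryAlg m q') (π ρ : Equiv.Perm (Fin m → Bool))
    (v1 v2 w1 w2 : Fin m → Bool)
    (hf : ∀ u, u ≠ v1 → u ≠ v2 → π u = ρ u)
    (hi : ∀ u, u ≠ w1 → u ≠ w2 → π⁻¹ u = ρ⁻¹ u) (j : ℕ) :
    nsq ((stepM A π j).mulVec (stateAt A ρ j) - (stepM A ρ j).mulVec (stateAt A ρ j))
      ≤ 4 * qw A ρ v1 v2 w1 w2 j := by
  unfold stepM qw
  split
  case isTrue h =>
    rw [← Matrix.mulVec_mulVec, ← Matrix.mulVec_mulVec, ← Matrix.mulVec_sub,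
      nsq_mulVec_unitary (A.unitary _)]
    split
    · exact nsq_oracle_diff A π ρ v1 v2 hf _
    · exact nsq_oracle_diff A π⁻¹ ρ⁻¹ w1 w2 hi _
  case isFalse h =>
    rw [Matrix.one_mulVec, sub_self]
    have : nsq (0 : St A → ℂ) = 0 := by simp [nsq]
    rw [this]
    norm_num

lemma bbbv (A : QueryAlg m q') (π ρ : Equiv.Perm (Fin m → Bool))
    (v1 v2 w1 w2 : Fin m → Bool)
    (hf : ∀ u, u ≠ v1 → u ≠ v2 → π u = ρ u)
    (hi : ∀ u, u ≠ w1 → u ≠ w2 → π⁻¹ u = ρ⁻¹ u) :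
    nsq (stateAt A π q' - stateAt A ρ q')
      ≤ 4 * q' * ∑ j ∈ Finset.range q', qw A ρ v1 v2 w1 w2 j := by
  set d : ℕ → ℝ := fun j =>
    l2 ((stepM A π j).mulVec (stateAt A ρ j) - (stepM A ρ j).mulVec (stateAt A ρ j)) with hd
  have h1 : l2 (stateAt A π q' - stateAt A ρ q') ≤ ∑ j ∈ Finset.range q', d j :=
    telescope A π ρ q'
  have h2 : (∑ j ∈ Finset.range q', d j)^2 ≤ q' * ∑ j ∈ Finset.range q', (d j)^2 := by
    have := sq_sum_le_card_mul_sum_sq (s := Finset.range q') (f := d)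
    rwa [Finset.card_range] at this
  have h3 : ∑ j ∈ Finset.range q', (d j)^2
      ≤ ∑ j ∈ Finset.range q', 4 * qw A ρ v1 v2 w1 w2 j := by
    refine Finset.sum_le_sum fun j _ => ?_
    rw [hd]
    rw [l2_sq]
    exact step_diff_le A π ρ v1 v2 w1 w2 hf hi j
  have h0 : nsq (stateAt A π q' - stateAt A ρ q')
      = l2 (stateAt A π q' - stateAt A ρ q')^2 := (l2_sq _).symm
  have h4 : l2 (stateAt A π q' - stateAt A ρ q')^2 ≤ (∑ j ∈ Finset.range q', d j)^2 :=
    pow_le_pow_left₀ (l2_nonneg _) h1 2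
  have h5 : (q' : ℝ) * ∑ j ∈ Finset.range q', 4 * qw A ρ v1 v2 w1 w2 j
      = 4 * q' * ∑ j ∈ Finset.range q', qw A ρ v1 v2 w1 w2 j := by
    rw [← Finset.mul_sum]; ring
  have h6 : (q' : ℝ) * (∑ j ∈ Finset.range q', (d j)^2)
      ≤ q' * ∑ j ∈ Finset.range q', 4 * qw A ρ v1 v2 w1 w2 j :=
    mul_le_mul_of_nonneg_left h3 (Nat.cast_nonneg q')
  linarith

end Stmt19

namespace Stmt19
variable {m c : ℕ}

/-- First `m - c` bits. -/
def pre (h : c ≤ m) (u : Fin m → Bool) : Fin (m - c) → Bool :=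
  fun i => u (Fin.cast (Nat.sub_add_cancel h) (Fin.castAdd c i))

/-- Last `c` bits. -/
def suf (h : c ≤ m) (u : Fin m → Bool) : Fin c → Bool :=
  fun i => u (Fin.cast (Nat.sub_add_cancel h) (Fin.natAdd (m - c) i))

lemma cast_cast (h : m - c + c = m) (i : Fin (m - c + c)) :
    Fin.cast h.symm (Fin.cast h i) = i := by ext; simp

lemma cast_cast' (h : m - c + c = m) (i : Fin m) :
    Fin.cast h (Fin.cast h.symm i) = i := by ext; simp

lemma pre_padZ (h : c ≤ m) (x : Fin (m - c) → Bool) (z : Fin c → Bool) :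
    pre h (padZ h x z) = x := by
  funext i
  show Fin.append x z (Fin.cast (Nat.sub_add_cancel h).symm
    (Fin.cast (Nat.sub_add_cancel h) (Fin.castAdd c i))) = x i
  rw [cast_cast, Fin.append_left]

lemma suf_padZ (h : c ≤ m) (x : Fin (m - c) → Bool) (z : Fin c → Bool) :
    suf h (padZ h x z) = z := by
  funext i
  show Fin.append x z (Fin.cast (Nat.sub_add_cancel h).symm
    (Fin.cast (Nat.sub_add_cancel h) (Fin.natAdd (m - c) i))) = z i
  rw [cast_cast, Fin.append_right]

lemma padZ_pre_suf (h : c ≤ m) (u : Fin m → Bool) :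
    padZ h (pre h u) (suf h u) = u := by
  funext i
  show Fin.append (pre h u) (suf h u) (Fin.cast (Nat.sub_add_cancel h).symm i) = u i
  have hu : u i = u (Fin.cast (Nat.sub_add_cancel h)
      (Fin.cast (Nat.sub_add_cancel h).symm i)) := by rw [cast_cast']
  rw [hu]
  generalize (Fin.cast (Nat.sub_add_cancel h).symm i) = j
  refine Fin.addCases (fun i0 => ?_) (fun i0 => ?_) j
  · rw [Fin.append_left]; rfl
  · rw [Fin.append_right]; rfl

/-- Splitting a bit string into prefix and suffix. -/
def splitEquiv (h : c ≤ m) :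
    ((Fin (m - c) → Bool) × (Fin c → Bool)) ≃ (Fin m → Bool) where
  toFun p := padZ h p.1 p.2
  invFun u := (pre h u, suf h u)
  left_inv p := by
    refine Prod.ext ?_ ?_
    · exact pre_padZ h p.1 p.2
    · exact suf_padZ h p.1 p.2
  right_inv u := padZ_pre_suf h u

/-- The all-zero suffix. -/
def zeroV (c : ℕ) : Fin c → Bool := fun _ => false

lemma padZ_inj (h : c ≤ m) {x x' : Fin (m - c) → Bool} {z z' : Fin c → Bool}
    (hxz : padZ h x z = padZ h x' z') : x = x' ∧ z = z' := by
  constructor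
  · rw [← pre_padZ h x z, hxz, pre_padZ]
  · rw [← suf_padZ h x z, hxz, suf_padZ]

lemma exists_padZ_iff (h : c ≤ m) (v : Fin m → Bool) :
    (∃ y : Fin (m - c) → Bool, v = padZ h y (zeroV c)) ↔ suf h v = zeroV c := by
  constructor
  · rintro ⟨y, rfl⟩; exact suf_padZ h y (zeroV c)
  · intro hv
    exact ⟨pre h v, by rw [← hv, padZ_pre_suf]⟩

lemma card_suf_zero (h : c ≤ m) (π : Equiv.Perm (Fin m → Bool)) :
    (Finset.univ.filter fun t : Fin m → Bool => suf h (π t) = zeroV c).card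
      = 2 ^ (m - c) := by
  classical
  have himg : (Finset.univ.filter fun t : Fin m → Bool => suf h (π t) = zeroV c)
      = Finset.univ.image (fun x : Fin (m - c) → Bool => π⁻¹ (padZ h x (zeroV c))) := by
    ext t
    simp only [Finset.mem_filter, Finset.mem_univ, true_and, Finset.mem_image]
    constructor
    · intro ht
      exact ⟨pre h (π t), by rw [← ht, padZ_pre_suf, ← Equiv.Perm.mul_apply, inv_mul_cancel, Equiv.Perm.one_apply]⟩
    · rintro ⟨x, rfl⟩
      rw [← Equiv.Perm.mul_apply, mul_inv_cancel, Equiv.Perm.one_apply, suf_padZ]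
  rw [himg, Finset.card_image_of_injective _ ?_]
  · rw [Finset.card_univ, Fintype.card_fun, Fintype.card_bool, Fintype.card_fin]
  · intro x x' hxx'
    have := π⁻¹.injective hxx'
    exact (padZ_inj h this).1

lemma card_X (h : c ≤ m) :
    Fintype.card (Fin (m - c) → Bool) = 2 ^ (m - c) := by
  rw [Fintype.card_fun, Fintype.card_bool, Fintype.card_fin]

end Stmt19

namespace Stmt19
variable {m c q' : ℕ}

/-- Projection onto outputs with X-prefix `x`. -/
noncomputable def proj (h : c ≤ m) (A : QueryAlg m q') (x : Fin (m - c) → Bool)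
    (v : St A → ℂ) : St A → ℂ :=
  fun s => if pre h s.2.1 = x then v s else 0

lemma nsq_proj_le (h : c ≤ m) (A : QueryAlg m q') (x : Fin (m - c) → Bool)
    (v : St A → ℂ) : nsq (proj h A x v) ≤ nsq v := by
  refine Finset.sum_le_sum fun s _ => ?_
  unfold proj
  split
  · exact le_refl _
  · simp only [norm_zero]
    simpa using sq_nonneg ‖v s‖

lemma outProb_eq (h : c ≤ m) (A : QueryAlg m q') (π : Equiv.Perm (Fin m → Bool))
    (x : Fin (m - c) → Bool) :
    outProbPrefix h A π x = nsq (proj h A x (finalState A π)) := by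
  unfold outProbPrefix nsq proj
  rw [Fintype.sum_prod_type]
  refine Finset.sum_congr rfl fun w _ => ?_
  rw [Fintype.sum_prod_type]
  rw [← Equiv.sum_comp (splitEquiv h)
    (fun u => ∑ y, ‖if pre h u = x then finalState A π (w, u, y) else 0‖^2)]
  show _ = ∑ p : (Fin (m - c) → Bool) × (Fin c → Bool),
      ∑ y, ‖if pre h (padZ h p.1 p.2) = x then finalState A π (w, padZ h p.1 p.2, y) else 0‖^2
  rw [Fintype.sum_prod_type]
  rw [Finset.sum_eq_single x (fun x' _ hx' => by simp [pre_padZ, hx'])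
    (fun hx => absurd (Finset.mem_univ _) hx)]
  simp [pre_padZ]

lemma sum_outProb (h : c ≤ m) (A : QueryAlg m q') (π : Equiv.Perm (Fin m → Bool)) :
    ∑ x : Fin (m - c) → Bool, outProbPrefix h A π x = 1 := by
  have h1 : nsq (finalState A π) = 1 := by
    rw [finalState_eq]; exact nsq_stateAt A π q'
  rw [← h1]
  have hR : nsq (finalState A π)
      = ∑ x : Fin (m - c) → Bool, ∑ z : Fin c → Bool, ∑ w : A.W, ∑ y : Fin m → Bool,
          ‖finalState A π (w, padZ h x z, y)‖^2 := by
    unfold nsq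
    rw [Fintype.sum_prod_type]
    simp_rw [Fintype.sum_prod_type]
    rw [Finset.sum_comm]
    rw [← Equiv.sum_comp (splitEquiv h)
      (fun u => ∑ w : A.W, ∑ y : Fin m → Bool, ‖finalState A π (w, u, y)‖^2)]
    show ∑ p : (Fin (m - c) → Bool) × (Fin c → Bool),
        ∑ w : A.W, ∑ y : Fin m → Bool, ‖finalState A π (w, padZ h p.1 p.2, y)‖^2 = _
    rw [Fintype.sum_prod_type]
  rw [hR]
  unfold outProbPrefix
  refine Finset.sum_congr rfl fun x _ => Finset.sum_comm
  
lemma outProb_nonneg (h : c ≤ m) (A : QueryAlg m q') (π : Equiv.Perm (Fin m → Bool))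
    (x : Fin (m - c) → Bool) : 0 ≤ outProbPrefix h A π x := by
  rw [outProb_eq]; exact nsq_nonneg _

lemma sum_outProb_le (h : c ≤ m) (A : QueryAlg m q') (π : Equiv.Perm (Fin m → Bool)) :
    ∑ x : Fin (m - c) → Bool, outProbPrefix h A π x ≤ 1 :=
  le_of_eq (sum_outProb h A π)

lemma outProb_le (h : c ≤ m) (A : QueryAlg m q') (π ρ : Equiv.Perm (Fin m → Bool))
    (x : Fin (m - c) → Bool) :
    outProbPrefix h A π x
      ≤ 2 * outProbPrefix h A ρ x + 2 * nsq (finalState A π - finalState A ρ) := by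
  rw [outProb_eq h A π x, outProb_eq h A ρ x]
  set a := l2 (proj h A x (finalState A π)) with hae
  set b := l2 (proj h A x (finalState A ρ)) with hbe
  set e := l2 (proj h A x (finalState A π - finalState A ρ)) with hee
  set f := l2 (finalState A π - finalState A ρ) with hfe
  have hsplit : proj h A x (finalState A π)
      = proj h A x (finalState A ρ) + proj h A x (finalState A π - finalState A ρ) := by
    funext s
    unfold proj
    by_cases hs : pre h s.2.1 = x <;> simp [hs]
  have h1 : a ≤ b + e := by
    rw [hae, hsplit]; exact l2_add_le _ _
  have h2 : e ≤ f := l2_mono (nsq_proj_le h A x _)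
  have h3 : a ≤ b + f := le_trans h1 (by linarith)
  have h4 : a^2 ≤ (b + f)^2 :=
    pow_le_pow_left₀ (l2_nonneg _) h3 2
  have h5 : (b + f)^2 ≤ 2 * b^2 + 2 * f^2 := by nlinarith [sq_nonneg (b - f)]
  have hA : a^2 = nsq (proj h A x (finalState A π)) := l2_sq _
  have hB : b^2 = nsq (proj h A x (finalState A ρ)) := l2_sq _
  have hF : f^2 = nsq (finalState A π - finalState A ρ) := l2_sq _
  rw [← hA, ← hB, ← hF]
  linarith

end Stmt19

namespace Stmt19
variable {m c q' : ℕ}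

lemma sum_rot {α β γ : Type*} (s₁ : Finset α) (s₂ : Finset β) (s₃ : Finset γ)
    (f : α → β → γ → ℝ) :
    ∑ a ∈ s₁, ∑ b ∈ s₂, ∑ g ∈ s₃, f a b g
      = ∑ g ∈ s₃, ∑ a ∈ s₁, ∑ b ∈ s₂, f a b g := by
  calc ∑ a ∈ s₁, ∑ b ∈ s₂, ∑ g ∈ s₃, f a b g
      = ∑ a ∈ s₁, ∑ g ∈ s₃, ∑ b ∈ s₂, f a b g :=
        Finset.sum_congr rfl fun a _ => Finset.sum_comm
    _ = ∑ g ∈ s₃, ∑ a ∈ s₁, ∑ b ∈ s₂, f a b g := Finset.sum_comm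

/-- The hybrid bound for a single `(x, t)` pair, after the `π ↦ π ∘ swap` substitution. -/
lemma key1 (h : c ≤ m) (A : QueryAlg m q') (x : Fin (m - c) → Bool) (t : Fin m → Bool) :
    ∑ π : Equiv.Perm (Fin m → Bool),
        (if suf h (π (padZ h x (zeroV c))) = zeroV c then outProbPrefix h A π x else 0)
      ≤ ∑ π : Equiv.Perm (Fin m → Bool),
          (if suf h (π t) = zeroV c then
            2 * outProbPrefix h A π x
              + 8 * q' * ∑ j ∈ Finset.range q',
                  qw A π (padZ h x (zeroV c)) t (π (padZ h x (zeroV c))) (π t) j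
           else 0) := by
  classical
  set x0 : Fin m → Bool := padZ h x (zeroV c) with hx0
  set τ : Equiv.Perm (Fin m → Bool) := Equiv.swap x0 t with hτdef
  have hbij := Equiv.sum_comp (Equiv.mulRight τ)
    (fun π : Equiv.Perm (Fin m → Bool) =>
      (if suf h (π x0) = zeroV c then outProbPrefix h A π x else 0))
  rw [← hbij]
  refine Finset.sum_le_sum fun π _ => ?_
  simp only [Equiv.coe_mulRight]
  have hτx0 : (π * τ) x0 = π t := by
    rw [Equiv.Perm.mul_apply, hτdef, Equiv.swap_apply_left]
  simp only [hτx0]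
  split
  · -- suf h (π t) = zeroV c
    have hP := outProb_le h A (π * τ) π x
    have hf : ∀ u, u ≠ x0 → u ≠ t → (π * τ) u = π u := by
      intro u hu1 hu2
      rw [Equiv.Perm.mul_apply, hτdef, Equiv.swap_apply_of_ne_of_ne hu1 hu2]
    have hi : ∀ u, u ≠ π x0 → u ≠ π t → (π * τ)⁻¹ u = π⁻¹ u := by
      intro u hu1 hu2
      rw [mul_inv_rev, Equiv.Perm.mul_apply, hτdef, Equiv.swap_inv]
      have h1 : π⁻¹ u ≠ x0 := fun he => hu1 (by rw [← he, ← Equiv.Perm.mul_apply, mul_inv_cancel, Equiv.Perm.one_apply])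
      have h2 : π⁻¹ u ≠ t := fun he => hu2 (by rw [← he, ← Equiv.Perm.mul_apply, mul_inv_cancel, Equiv.Perm.one_apply])
      rw [Equiv.swap_apply_of_ne_of_ne h1 h2]
    have hΔ : nsq (finalState A (π * τ) - finalState A π)
        ≤ 4 * q' * ∑ j ∈ Finset.range q', qw A π x0 t (π x0) (π t) j := by
      rw [finalState_eq, finalState_eq]
      exact bbbv A (π * τ) π x0 t (π x0) (π t) hf hi
    have hsum_nonneg : (0:ℝ) ≤ ∑ j ∈ Finset.range q', qw A π x0 t (π x0) (π t) j :=
      Finset.sum_nonneg fun j _ => qw_nonneg A π x0 t (π x0) (π t) j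
    calc outProbPrefix h A (π * τ) x
        ≤ 2 * outProbPrefix h A π x
            + 2 * nsq (finalState A (π * τ) - finalState A π) := hP
      _ ≤ 2 * outProbPrefix h A π x
            + 8 * q' * ∑ j ∈ Finset.range q', qw A π x0 t (π x0) (π t) j := by
          have := hΔ
          linarith
  · exact le_refl 0

end Stmt19

namespace Stmt19
variable {m c q' : ℕ}

lemma sum_ite_const (h : c ≤ m) (π : Equiv.Perm (Fin m → Bool)) (r : ℝ) :
    ∑ t : Fin m → Bool, (if suf h (π t) = zeroV c then r else 0)
      = (2^(m-c) : ℝ) * r := by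
  classical
  rw [Finset.sum_ite, Finset.sum_const_zero, add_zero, Finset.sum_const,
    card_suf_zero h π, nsmul_eq_mul]
  push_cast
  ring

lemma sum_ite_fun (h : c ≤ m) (π : Equiv.Perm (Fin m → Bool)) (g : (Fin m → Bool) → ℝ) :
    ∑ t : Fin m → Bool, (if suf h (π t) = zeroV c then g t else 0)
      = ∑ t ∈ Finset.univ.filter (fun t => suf h (π t) = zeroV c), g t := by
  classical
  rw [Finset.sum_ite, Finset.sum_const_zero, add_zero]

lemma part1_pi (h : c ≤ m) (A : QueryAlg m q') (π : Equiv.Perm (Fin m → Bool)) :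
    ∑ x : Fin (m - c) → Bool, ∑ t : Fin m → Bool,
        (if suf h (π t) = zeroV c then 2 * outProbPrefix h A π x else 0)
      ≤ 2 * 2^(m-c) := by
  have e1 : ∀ x, ∑ t : Fin m → Bool,
      (if suf h (π t) = zeroV c then 2 * outProbPrefix h A π x else 0)
      = (2^(m-c) : ℝ) * (2 * outProbPrefix h A π x) := fun x => sum_ite_const h π _
  calc ∑ x : Fin (m - c) → Bool, ∑ t : Fin m → Bool,
        (if suf h (π t) = zeroV c then 2 * outProbPrefix h A π x else 0)
      = ∑ x : Fin (m - c) → Bool, (2^(m-c) : ℝ) * (2 * outProbPrefix h A π x) :=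
        Finset.sum_congr rfl fun x _ => e1 x
    _ = (2^(m-c) : ℝ) * 2 * ∑ x : Fin (m - c) → Bool, outProbPrefix h A π x := by
        rw [Finset.mul_sum]
        refine Finset.sum_congr rfl fun x _ => by ring
    _ ≤ (2^(m-c) : ℝ) * 2 * 1 := by
        have := sum_outProb_le h A π
        have hpos : (0:ℝ) ≤ (2^(m-c) : ℝ) * 2 := by positivity
        nlinarith
    _ = 2 * 2^(m-c) := by ring

lemma part2_pi (h : c ≤ m) (A : QueryAlg m q') (π : Equiv.Perm (Fin m → Bool)) (j : ℕ) :
    ∑ x : Fin (m - c) → Bool, ∑ t : Fin m → Bool,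
        (if suf h (π t) = zeroV c then
          qw A π (padZ h x (zeroV c)) t (π (padZ h x (zeroV c))) (π t) j else 0)
      ≤ 2 * 2^(m-c) := by
  classical
  by_cases hj : j < q'
  · set φ := stateAt A π j with hφ
    have hφ1 : nsq φ = 1 := nsq_stateAt A π j
    -- injectivity facts
    have hinj1 : ∀ x ∈ (Finset.univ : Finset (Fin (m-c) → Bool)), ∀ y ∈ Finset.univ,
        padZ h x (zeroV c) = padZ h y (zeroV c) → x = y :=
      fun x _ y _ hxy => (padZ_inj h hxy).1
    have hinj2 : ∀ x ∈ (Finset.univ : Finset (Fin (m-c) → Bool)), ∀ y ∈ Finset.univ,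
        π (padZ h x (zeroV c)) = π (padZ h y (zeroV c)) → x = y :=
      fun x _ y _ hxy => (padZ_inj h (π.injective hxy)).1
    have hsum1 : ∑ x : Fin (m-c) → Bool, wt A φ (padZ h x (zeroV c)) ≤ 1 := by
      have := sum_wt_injOn A φ Finset.univ (fun x => padZ h x (zeroV c)) hinj1
      rwa [hφ1] at this
    have hsum2 : ∑ x : Fin (m-c) → Bool, wt A φ (π (padZ h x (zeroV c))) ≤ 1 := by
      have := sum_wt_injOn A φ Finset.univ (fun x => π (padZ h x (zeroV c))) hinj2
      rwa [hφ1] at this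
    have hsum3 : ∑ t ∈ Finset.univ.filter (fun t => suf h (π t) = zeroV c), wt A φ t ≤ 1 := by
      have := sum_wt_injOn A φ (Finset.univ.filter (fun t => suf h (π t) = zeroV c))
        (fun t => t) (fun a _ b _ hab => hab)
      rwa [hφ1] at this
    have hsum4 : ∑ t ∈ Finset.univ.filter (fun t => suf h (π t) = zeroV c),
        wt A φ (π t) ≤ 1 := by
      have := sum_wt_injOn A φ (Finset.univ.filter (fun t => suf h (π t) = zeroV c))
        (fun t => π t) (fun a _ b _ hab => π.injective hab)
      rwa [hφ1] at this
    have hcX : ((Finset.univ : Finset (Fin (m-c) → Bool)).card : ℝ) = (2^(m-c) : ℝ) := by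
      rw [Finset.card_univ, card_X h]
      push_cast; ring
    -- case split on direction
    have hqw : ∀ (v1 v2 : Fin m → Bool), qw A π v1 v2 (π v1) (π v2) j
        = if A.fwd ⟨j, hj⟩ then wt A φ v1 + wt A φ v2
          else wt A φ (π v1) + wt A φ (π v2) := by
      intro v1 v2
      unfold qw
      rw [dif_pos hj]
    by_cases hfwd : A.fwd ⟨j, hj⟩
    · -- forward query
      calc ∑ x : Fin (m - c) → Bool, ∑ t : Fin m → Bool,
            (if suf h (π t) = zeroV c then
              qw A π (padZ h x (zeroV c)) t (π (padZ h x (zeroV c))) (π t) j else 0)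
          = ∑ x : Fin (m - c) → Bool, ∑ t : Fin m → Bool,
            (if suf h (π t) = zeroV c then
              (wt A φ (padZ h x (zeroV c)) + wt A φ t) else 0) := by
            refine Finset.sum_congr rfl fun x _ => Finset.sum_congr rfl fun t _ => ?_
            rw [hqw, if_pos hfwd]
        _ = ∑ x : Fin (m - c) → Bool,
              ((2^(m-c) : ℝ) * wt A φ (padZ h x (zeroV c))
                + ∑ t ∈ Finset.univ.filter (fun t => suf h (π t) = zeroV c), wt A φ t) := by
            refine Finset.sum_congr rfl fun x _ => ?_
            have hsplit : ∀ t : Fin m → Bool, (if suf h (π t) = zeroV c then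
                  (wt A φ (padZ h x (zeroV c)) + wt A φ t) else 0)
                = (if suf h (π t) = zeroV c then wt A φ (padZ h x (zeroV c)) else 0)
                  + (if suf h (π t) = zeroV c then wt A φ t else 0) :=
              fun t => by split <;> simp
            rw [Finset.sum_congr rfl fun t _ => hsplit t, Finset.sum_add_distrib,
              sum_ite_const h π, sum_ite_fun h π]
        _ = (2^(m-c) : ℝ) * (∑ x : Fin (m-c) → Bool, wt A φ (padZ h x (zeroV c)))
              + ((Finset.univ : Finset (Fin (m-c) → Bool)).card : ℝ)
                * (∑ t ∈ Finset.univ.filter (fun t => suf h (π t) = zeroV c), wt A φ t) := by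
            rw [Finset.sum_add_distrib, ← Finset.mul_sum, Finset.sum_const, nsmul_eq_mul]
        _ ≤ 2 * 2^(m-c) := by
            rw [hcX]
            have hKnn : (0:ℝ) ≤ (2^(m-c):ℝ) := by positivity
            have h1 := mul_le_mul_of_nonneg_left hsum1 hKnn
            have h3 := mul_le_mul_of_nonneg_left hsum3 hKnn
            linarith
    · -- inverse query
      calc ∑ x : Fin (m - c) → Bool, ∑ t : Fin m → Bool,
            (if suf h (π t) = zeroV c then
              qw A π (padZ h x (zeroV c)) t (π (padZ h x (zeroV c))) (π t) j else 0)
          = ∑ x : Fin (m - c) → Bool, ∑ t : Fin m → Bool,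
            (if suf h (π t) = zeroV c then
              (wt A φ (π (padZ h x (zeroV c))) + wt A φ (π t)) else 0) := by
            refine Finset.sum_congr rfl fun x _ => Finset.sum_congr rfl fun t _ => ?_
            rw [hqw, if_neg hfwd]
        _ = ∑ x : Fin (m - c) → Bool,
              ((2^(m-c) : ℝ) * wt A φ (π (padZ h x (zeroV c)))
                + ∑ t ∈ Finset.univ.filter (fun t => suf h (π t) = zeroV c), wt A φ (π t)) := by
            refine Finset.sum_congr rfl fun x _ => ?_
            have hsplit : ∀ t : Fin m → Bool, (if suf h (π t) = zeroV c then
                  (wt A φ (π (padZ h x (zeroV c))) + wt A φ (π t)) else 0)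
                = (if suf h (π t) = zeroV c then wt A φ (π (padZ h x (zeroV c))) else 0)
                  + (if suf h (π t) = zeroV c then wt A φ (π t) else 0) :=
              fun t => by split <;> simp
            rw [Finset.sum_congr rfl fun t _ => hsplit t, Finset.sum_add_distrib,
              sum_ite_const h π, sum_ite_fun h π]
        _ = (2^(m-c) : ℝ) * (∑ x : Fin (m-c) → Bool, wt A φ (π (padZ h x (zeroV c))))
              + ((Finset.univ : Finset (Fin (m-c) → Bool)).card : ℝ)
                * (∑ t ∈ Finset.univ.filter (fun t => suf h (π t) = zeroV c), wt A φ (π t)) := by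
            rw [Finset.sum_add_distrib, ← Finset.mul_sum, Finset.sum_const, nsmul_eq_mul]
        _ ≤ 2 * 2^(m-c) := by
            rw [hcX]
            have hKnn : (0:ℝ) ≤ (2^(m-c):ℝ) := by positivity
            have h2 := mul_le_mul_of_nonneg_left hsum2 hKnn
            have h4 := mul_le_mul_of_nonneg_left hsum4 hKnn
            linarith
  · -- j ≥ q' : qw = 0
    have : ∀ (x : Fin (m-c) → Bool) (t : Fin m → Bool),
        qw A π (padZ h x (zeroV c)) t (π (padZ h x (zeroV c))) (π t) j = 0 := by
      intro x t; unfold qw; rw [dif_neg hj]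
    calc _ ≤ (0:ℝ) := by
          apply le_of_eq
          refine Finset.sum_eq_zero fun x _ => Finset.sum_eq_zero fun t _ => ?_
          rw [this x t]; simp
      _ ≤ 2 * 2^(m-c) := by positivity

end Stmt19

namespace Stmt19
variable {m c q' : ℕ}

lemma part2_pi_total (h : c ≤ m) (A : QueryAlg m q') (π : Equiv.Perm (Fin m → Bool)) :
    ∑ x : Fin (m-c) → Bool, ∑ t : Fin m → Bool,
        (if suf h (π t) = zeroV c then
          (8:ℝ) * q' * ∑ j ∈ Finset.range q',
                qw A π (padZ h x (zeroV c)) t (π (padZ h x (zeroV c))) (π t) j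
         else 0)
      ≤ (8:ℝ) * q' * (q' * (2 * 2^(m-c))) := by
  classical
  have hpull : ∑ x : Fin (m-c) → Bool, ∑ t : Fin m → Bool,
      (if suf h (π t) = zeroV c then
        (8:ℝ) * q' * ∑ j ∈ Finset.range q',
              qw A π (padZ h x (zeroV c)) t (π (padZ h x (zeroV c))) (π t) j
       else 0)
      = (8:ℝ) * q' * ∑ x : Fin (m-c) → Bool, ∑ t : Fin m → Bool,
        ∑ j ∈ Finset.range q',
          (if suf h (π t) = zeroV c then
            qw A π (padZ h x (zeroV c)) t (π (padZ h x (zeroV c))) (π t) j else 0) := by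
    rw [Finset.mul_sum]
    refine Finset.sum_congr rfl fun x _ => ?_
    rw [Finset.mul_sum]
    refine Finset.sum_congr rfl fun t _ => ?_
    split
    · rw [Finset.mul_sum]
    · simp
  rw [hpull, sum_rot]
  have hin : ∑ j ∈ Finset.range q', ∑ x : Fin (m-c) → Bool, ∑ t : Fin m → Bool,
        (if suf h (π t) = zeroV c then
          qw A π (padZ h x (zeroV c)) t (π (padZ h x (zeroV c))) (π t) j else 0)
      ≤ ∑ j ∈ Finset.range q', (2 * 2^(m-c) : ℝ) :=
    Finset.sum_le_sum fun j _ => part2_pi h A π j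
  have hcount : ∑ j ∈ Finset.range q', (2 * 2^(m-c) : ℝ) = q' * (2 * 2^(m-c)) := by
    rw [Finset.sum_const, Finset.card_range, nsmul_eq_mul]
  have h8 : (0:ℝ) ≤ 8 * q' := by positivity
  rw [← hcount] at *
  exact mul_le_mul_of_nonneg_left hin h8

end Stmt19

namespace Stmt19
variable {m c q' : ℕ}

lemma main (h : c ≤ m) (A : QueryAlg m q') :
    (2:ℝ)^m * (∑ π : Equiv.Perm (Fin m → Bool),
        ∑ x ∈ Finset.univ.filter (fun x : Fin (m-c) → Bool =>
          ∃ y, π (padZ h x (zeroV c)) = padZ h y (zeroV c)),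
          outProbPrefix h A π x)
      ≤ (2 + 16 * (q':ℝ)^2) * 2^(m-c)
          * (Fintype.card (Equiv.Perm (Fin m → Bool)) : ℝ) := by
  classical
  have hfil : ∀ π : Equiv.Perm (Fin m → Bool),
      (∑ x ∈ Finset.univ.filter (fun x : Fin (m-c) → Bool =>
          ∃ y, π (padZ h x (zeroV c)) = padZ h y (zeroV c)),
          outProbPrefix h A π x)
      = ∑ x : Fin (m-c) → Bool,
          (if suf h (π (padZ h x (zeroV c))) = zeroV c
            then outProbPrefix h A π x else 0) := by
    intro π
    have hfc : Finset.univ.filter (fun x : Fin (m-c) → Bool =>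
          ∃ y, π (padZ h x (zeroV c)) = padZ h y (zeroV c))
        = Finset.univ.filter (fun x : Fin (m-c) → Bool =>
            suf h (π (padZ h x (zeroV c))) = zeroV c) :=
      Finset.filter_congr fun x _ => exists_padZ_iff h _
    rw [hfc, Finset.sum_filter]
  have hM : (2:ℝ)^m * (∑ π : Equiv.Perm (Fin m → Bool),
        ∑ x ∈ Finset.univ.filter (fun x : Fin (m-c) → Bool =>
          ∃ y, π (padZ h x (zeroV c)) = padZ h y (zeroV c)),
          outProbPrefix h A π x)
      = ∑ x : Fin (m-c) → Bool, ∑ t : Fin m → Bool, ∑ π : Equiv.Perm (Fin m → Bool),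
          (if suf h (π (padZ h x (zeroV c))) = zeroV c
            then outProbPrefix h A π x else 0) := by
    rw [Finset.sum_congr rfl (fun π _ => hfil π), Finset.sum_comm, Finset.mul_sum]
    refine Finset.sum_congr rfl fun x _ => ?_
    rw [Finset.sum_const, Finset.card_univ, Fintype.card_fun, Fintype.card_bool,
      Fintype.card_fin, nsmul_eq_mul]
    push_cast
    ring
  rw [hM]
  have step2 : ∑ x : Fin (m-c) → Bool, ∑ t : Fin m → Bool, ∑ π : Equiv.Perm (Fin m → Bool),
          (if suf h (π (padZ h x (zeroV c))) = zeroV c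
            then outProbPrefix h A π x else 0)
      ≤ ∑ x : Fin (m-c) → Bool, ∑ t : Fin m → Bool, ∑ π : Equiv.Perm (Fin m → Bool),
          (if suf h (π t) = zeroV c then
            2 * outProbPrefix h A π x
              + 8 * q' * ∑ j ∈ Finset.range q',
                  qw A π (padZ h x (zeroV c)) t (π (padZ h x (zeroV c))) (π t) j
           else 0) :=
    Finset.sum_le_sum fun x _ => Finset.sum_le_sum fun t _ => key1 h A x t
  refine le_trans step2 ?_
  have hsplit : ∑ x : Fin (m-c) → Bool, ∑ t : Fin m → Bool, ∑ π : Equiv.Perm (Fin m → Bool),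
          (if suf h (π t) = zeroV c then
            2 * outProbPrefix h A π x
              + 8 * q' * ∑ j ∈ Finset.range q',
                  qw A π (padZ h x (zeroV c)) t (π (padZ h x (zeroV c))) (π t) j
           else 0)
      = (∑ x : Fin (m-c) → Bool, ∑ t : Fin m → Bool, ∑ π : Equiv.Perm (Fin m → Bool),
          (if suf h (π t) = zeroV c then 2 * outProbPrefix h A π x else 0))
        + (∑ x : Fin (m-c) → Bool, ∑ t : Fin m → Bool, ∑ π : Equiv.Perm (Fin m → Bool),
          (if suf h (π t) = zeroV c then
            (8:ℝ) * q' * ∑ j ∈ Finset.range q',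
                  qw A π (padZ h x (zeroV c)) t (π (padZ h x (zeroV c))) (π t) j
           else 0)) := by
    rw [← Finset.sum_add_distrib]
    refine Finset.sum_congr rfl fun x _ => ?_
    rw [← Finset.sum_add_distrib]
    refine Finset.sum_congr rfl fun t _ => ?_
    rw [← Finset.sum_add_distrib]
    refine Finset.sum_congr rfl fun π _ => ?_
    split <;> simp
  rw [hsplit]
  -- Part 1
  have hA1 : (∑ x : Fin (m-c) → Bool, ∑ t : Fin m → Bool, ∑ π : Equiv.Perm (Fin m → Bool),
          (if suf h (π t) = zeroV c then 2 * outProbPrefix h A π x else 0))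
      ≤ (Fintype.card (Equiv.Perm (Fin m → Bool)) : ℝ) * (2 * 2^(m-c)) := by
    rw [sum_rot]
    calc ∑ π : Equiv.Perm (Fin m → Bool), ∑ x : Fin (m-c) → Bool, ∑ t : Fin m → Bool,
          (if suf h (π t) = zeroV c then 2 * outProbPrefix h A π x else 0)
        ≤ ∑ π : Equiv.Perm (Fin m → Bool), (2 * 2^(m-c) : ℝ) :=
          Finset.sum_le_sum fun π _ => part1_pi h A π
      _ = (Fintype.card (Equiv.Perm (Fin m → Bool)) : ℝ) * (2 * 2^(m-c)) := by
          rw [Finset.sum_const, Finset.card_univ, nsmul_eq_mul]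
  -- Part 2
  have hA2 : (∑ x : Fin (m-c) → Bool, ∑ t : Fin m → Bool, ∑ π : Equiv.Perm (Fin m → Bool),
          (if suf h (π t) = zeroV c then
            (8:ℝ) * q' * ∑ j ∈ Finset.range q',
                  qw A π (padZ h x (zeroV c)) t (π (padZ h x (zeroV c))) (π t) j
           else 0))
      ≤ (Fintype.card (Equiv.Perm (Fin m → Bool)) : ℝ)
          * (8 * q' * (q' * (2 * 2^(m-c)))) := by
    rw [sum_rot]
    calc ∑ π : Equiv.Perm (Fin m → Bool), ∑ x : Fin (m-c) → Bool, ∑ t : Fin m → Bool,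
          (if suf h (π t) = zeroV c then
            (8:ℝ) * q' * ∑ j ∈ Finset.range q',
                  qw A π (padZ h x (zeroV c)) t (π (padZ h x (zeroV c))) (π t) j
           else 0)
        ≤ ∑ π : Equiv.Perm (Fin m → Bool), ((8:ℝ) * q' * (q' * (2 * 2^(m-c)))) :=
          Finset.sum_le_sum fun π _ => part2_pi_total h A π
      _ = (Fintype.card (Equiv.Perm (Fin m → Bool)) : ℝ)
            * (8 * q' * (q' * (2 * 2^(m-c)))) := by
          rw [Finset.sum_const, Finset.card_univ, nsmul_eq_mul]
  have hfinal : (Fintype.card (Equiv.Perm (Fin m → Bool)) : ℝ) * (2 * 2^(m-c))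
      + (Fintype.card (Equiv.Perm (Fin m → Bool)) : ℝ) * (8 * q' * (q' * (2 * 2^(m-c))))
      = (2 + 16 * (q':ℝ)^2) * 2^(m-c) * (Fintype.card (Equiv.Perm (Fin m → Bool)) : ℝ) := by
    ring
  linarith

end Stmt19

/-- Double-sided zero search; Unruh's conjecture.  Let `1 ≤ c ≤ 2n`.
Any quantum query algorithm making fewer than `q` queries to a random permutation of
`{0,1}^{2n}` and its inverse outputs `x ∈ {0,1}^{2n−c}` with `π(x‖0^c) = y‖0^c` for some
`y ∈ {0,1}^{2n−c}` with average probability at most `1828 q³ (n+1)/2^c`.  (For `c = n`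
this is Unruh's double-sided zero-search conjecture.) -/
theorem stmt19 {n c : ℕ} (hn : 1 ≤ n) (hc1 : 1 ≤ c) (hc2 : c ≤ 2 * n)
    (q q' : ℕ) (hq : 1 ≤ q) (hq' : q' < q) (A : QueryAlg (2 * n) q') :
    (∑ π : Equiv.Perm (Fin (2 * n) → Bool),
        ∑ x ∈ Finset.univ.filter
            (fun x : Fin (2 * n - c) → Bool =>
              ∃ y : Fin (2 * n - c) → Bool,
                π (padZ hc2 x fun _ => false) = padZ hc2 y fun _ => false),
          outProbPrefix hc2 A π x) / (((2 ^ (2 * n) : ℕ).factorial : ℝ))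
      ≤ 1828 * (q : ℝ) ^ 3 * ((n : ℝ) + 1) / (2 : ℝ) ^ c := by
  classical
  have hmain := Stmt19.main hc2 A
  unfold Stmt19.zeroV at hmain
  have hcard : (Fintype.card (Equiv.Perm (Fin (2*n) → Bool)) : ℝ)
      = (((2 ^ (2 * n) : ℕ).factorial : ℝ)) := by
    rw [Fintype.card_perm, Fintype.card_fun, Fintype.card_bool, Fintype.card_fin]
  rw [hcard] at hmain
  set M : ℝ := ∑ π : Equiv.Perm (Fin (2 * n) → Bool),
        ∑ x ∈ Finset.univ.filter
            (fun x : Fin (2 * n - c) → Bool =>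
              ∃ y : Fin (2 * n - c) → Bool,
                π (padZ hc2 x fun _ => false) = padZ hc2 y fun _ => false),
          outProbPrefix hc2 A π x with hMdef
  set F : ℝ := ((2 ^ (2 * n) : ℕ).factorial : ℝ) with hFdef
  have hFpos : (0:ℝ) < F := by
    rw [hFdef]
    exact_mod_cast Nat.factorial_pos _
  have hcpos : (0:ℝ) < (2:ℝ)^c := by positivity
  rw [div_le_div_iff₀ hFpos hcpos]
  have hsplitpow : (2:ℝ)^(2*n) = 2^(2*n-c) * 2^c := by
    rw [← pow_add]
    congr 1
    omega
  have hKpos : (0:ℝ) < 2^(2*n-c) := by positivity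
  have h1 : (2:ℝ)^(2*n-c) * (2^c * M)
      ≤ 2^(2*n-c) * ((2 + 16*(q':ℝ)^2) * F) := by
    calc (2:ℝ)^(2*n-c) * (2^c * M) = 2^(2*n) * M := by rw [hsplitpow]; ring
      _ ≤ (2 + 16*(q':ℝ)^2) * 2^(2*n-c) * F := hmain
      _ = 2^(2*n-c) * ((2 + 16*(q':ℝ)^2) * F) := by ring
  have h2 : (2:ℝ)^c * M ≤ (2 + 16*(q':ℝ)^2) * F :=
    le_of_mul_le_mul_left h1 hKpos
  have hcoef : (2 + 16*(q':ℝ)^2) ≤ 1828 * (q:ℝ)^3 * ((n:ℝ)+1) := by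
    have haQ : (q':ℝ) ≤ (q:ℝ) := by exact_mod_cast le_of_lt hq'
    have ha : (0:ℝ) ≤ (q':ℝ) := Nat.cast_nonneg _
    have hQ1 : (1:ℝ) ≤ (q:ℝ) := by exact_mod_cast hq
    have hN1 : (1:ℝ) ≤ (n:ℝ) := by exact_mod_cast hn
    have ha2 : (q':ℝ)^2 ≤ (q:ℝ)^2 := pow_le_pow_left₀ ha haQ 2
    have hQ23 : (q:ℝ)^2 ≤ (q:ℝ)^3 := pow_le_pow_right₀ hQ1 (by norm_num)
    have hQ31 : (1:ℝ) ≤ (q:ℝ)^3 := by nlinarith [hQ1, hQ23, sq_nonneg ((q:ℝ) - 1)]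
    have hNQ : 1828*(q:ℝ)^3*2 ≤ 1828*(q:ℝ)^3*((n:ℝ)+1) := by
      apply mul_le_mul_of_nonneg_left (by linarith)
      nlinarith
    nlinarith
  have hFnn : (0:ℝ) ≤ F := le_of_lt hFpos
  calc M * (2:ℝ)^c = (2:ℝ)^c * M := by ring
    _ ≤ (2 + 16*(q':ℝ)^2) * F := h2
    _ ≤ 1828 * (q:ℝ)^3 * ((n:ℝ)+1) * F := mul_le_mul_of_nonneg_right hcoef hFnn
end
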